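/- arXiv:0911.4459 — 5 statements merged into one kernel-verified Lean document; each statement's English description precedes it below -/
import Mathlib

section
/- If G is a triangle-free graph with vertex set V that admits an interval t-coloring, then t ≤ |V| − 1. -/
open SimpleGraph

/-- `c` is an interval `t`-coloring of `G`: edges get colors in `{1,…,t}`, every color
`1,…,t` is used, adjacent edges get distinct colors, and the set of colors of edges
incident to any vertex is an interval of integers. -/
def IsIntervalColoring {V : Type*} (G : SimpleGraph V) (t : ℕ) (c : Sym2 V → ℕ) : Prop :=
  (∀ e ∈ G.edgeSet, 1 ≤ c e ∧ c e ≤ t) ∧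
  (∀ i, 1 ≤ i → i ≤ t → ∃ e ∈ G.edgeSet, c e = i) ∧
  (∀ v w₁ w₂, G.Adj v w₁ → G.Adj v w₂ → w₁ ≠ w₂ → c s(v, w₁) ≠ c s(v, w₂)) ∧
  (∀ v i j k, (∃ w, G.Adj v w ∧ c s(v, w) = i) → (∃ w, G.Adj v w ∧ c s(v, w) = k) →
    i ≤ j → j ≤ k → ∃ w, G.Adj v w ∧ c s(v, w) = j)

/-- `G` has an interval `t`-coloring. -/
def HasIntervalColoring {V : Type*} (G : SimpleGraph V) (t : ℕ) : Prop :=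
  ∃ c : Sym2 V → ℕ, IsIntervalColoring G t c

/-- `G` is interval colorable (`G ∈ 𝔑`). -/
def IntervalColorable {V : Type*} (G : SimpleGraph V) : Prop :=
  ∃ t : ℕ, 1 ≤ t ∧ HasIntervalColoring G t

/-- `w G`: the least number of colors in an interval coloring of `G`. -/
noncomputable def wNum {V : Type*} (G : SimpleGraph V) : ℕ :=
  sInf {t | HasIntervalColoring G t}

/-- `W G`: the greatest number of colors in an interval coloring of `G`. -/
noncomputable def WNum {V : Type*} (G : SimpleGraph V) : ℕ :=
  sSup {t | HasIntervalColoring G t}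

/-- `G` is `r`-regular: every vertex has exactly `r` neighbors. -/
def IsRegularGraph {V : Type*} (G : SimpleGraph V) (r : ℕ) : Prop :=
  ∀ v : V, (G.neighborSet v).ncard = r

/-- `c` is a proper edge coloring of `G` using colors `0,…,k-1`. -/
def IsProperEdgeColoring {V : Type*} (G : SimpleGraph V) (k : ℕ) (c : Sym2 V → ℕ) : Prop :=
  (∀ e ∈ G.edgeSet, c e < k) ∧
  (∀ v w₁ w₂, G.Adj v w₁ → G.Adj v w₂ → w₁ ≠ w₂ → c s(v, w₁) ≠ c s(v, w₂))

/-- The chromatic index `χ'(G)`. -/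
noncomputable def edgeChromaticNumber {V : Type*} (G : SimpleGraph V) : ℕ :=
  sInf {k | ∃ c : Sym2 V → ℕ, IsProperEdgeColoring G k c}

/-- `G` is 1-factorable: its edge set decomposes into perfect matchings. -/
def IsOneFactorable {V : Type*} (G : SimpleGraph V) : Prop :=
  ∃ (n : ℕ) (f : Fin n → SimpleGraph.Subgraph G),
    (∀ i, (f i).IsPerfectMatching) ∧
    (∀ e ∈ G.edgeSet, ∃! i, e ∈ (f i).edgeSet)

/-- The tensor (direct) product `G × H`. -/
def tensorProd {α β : Type*} (G : SimpleGraph α) (H : SimpleGraph β) :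
    SimpleGraph (α × β) where
  Adj p q := G.Adj p.1 q.1 ∧ H.Adj p.2 q.2
  symm := Std.Symm.mk fun p q ⟨h₁, h₂⟩ => ⟨h₁.symm, h₂.symm⟩
  loopless := Std.Irrefl.mk fun p h => G.loopless.irrefl p.1 h.1

/-- The strong tensor (semistrong) product `G ⊗ H`. -/
def strongTensorProd {α β : Type*} (G : SimpleGraph α) (H : SimpleGraph β) :
    SimpleGraph (α × β) where
  Adj p q := (G.Adj p.1 q.1 ∧ H.Adj p.2 q.2) ∨ (p.2 = q.2 ∧ G.Adj p.1 q.1)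
  symm := Std.Symm.mk fun p q h => by
    rcases h with ⟨h₁, h₂⟩ | ⟨h₁, h₂⟩
    · exact Or.inl ⟨h₁.symm, h₂.symm⟩
    · exact Or.inr ⟨h₁.symm, h₂.symm⟩
  loopless := Std.Irrefl.mk fun p h => by
    rcases h with ⟨h₁, _⟩ | ⟨_, h₁⟩ <;> exact G.loopless.irrefl p.1 h₁

/-- The strong product `G ⊠ H`. -/
def strongProd {α β : Type*} (G : SimpleGraph α) (H : SimpleGraph β) :
    SimpleGraph (α × β) where
  Adj p q := (G.Adj p.1 q.1 ∧ H.Adj p.2 q.2) ∨ (p.1 = q.1 ∧ H.Adj p.2 q.2) ∨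
    (p.2 = q.2 ∧ G.Adj p.1 q.1)
  symm := Std.Symm.mk fun p q h => by
    rcases h with ⟨h₁, h₂⟩ | ⟨h₁, h₂⟩ | ⟨h₁, h₂⟩
    · exact Or.inl ⟨h₁.symm, h₂.symm⟩
    · exact Or.inr (Or.inl ⟨h₁.symm, h₂.symm⟩)
    · exact Or.inr (Or.inr ⟨h₁.symm, h₂.symm⟩)
  loopless := Std.Irrefl.mk fun p h => by
    rcases h with ⟨h₁, _⟩ | ⟨_, h₂⟩ | ⟨_, h₁⟩
    · exact G.loopless.irrefl p.1 h₁
    · exact H.loopless.irrefl p.2 h₂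
    · exact G.loopless.irrefl p.1 h₁

/-- The lexicographic product (composition) `G[H]`. -/
def lexProd {α β : Type*} (G : SimpleGraph α) (H : SimpleGraph β) :
    SimpleGraph (α × β) where
  Adj p q := G.Adj p.1 q.1 ∨ (p.1 = q.1 ∧ H.Adj p.2 q.2)
  symm := Std.Symm.mk fun p q h => by
    rcases h with h₁ | ⟨h₁, h₂⟩
    · exact Or.inl h₁.symm
    · exact Or.inr ⟨h₁.symm, h₂.symm⟩
  loopless := Std.Irrefl.mk fun p h => by
    rcases h with h₁ | ⟨_, h₂⟩
    · exact G.loopless.irrefl p.1 h₁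
    · exact H.loopless.irrefl p.2 h₂


private def ICspec {V : Type*} (G : SimpleGraph V) (c : Sym2 V → ℕ) (v : V) : Set ℕ :=
  {i | ∃ w, G.Adj v w ∧ c s(v, w) = i}

private lemma interval_aux {V : Type*} [Fintype V] :
    ∀ t : ℕ, ∀ G : SimpleGraph V, G.CliqueFree 3 → ∀ c : Sym2 V → ℕ,
      IsIntervalColoring G t c → 1 ≤ t →
      ∃ Y : Finset V, t + 1 ≤ Y.card ∧ ∀ y ∈ Y, ∃ z, G.Adj y z := by
  classical
  intro t
  induction t using Nat.strong_induction_on with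
  | _ t IH =>
  intro G hG c hc ht
  obtain ⟨hbound, hused, hproper, hinterval⟩ := hc
  have hspec_bound : ∀ v : V, ∀ i ∈ ICspec G c v, 1 ≤ i ∧ i ≤ t := by
    rintro v i ⟨w, hw, rfl⟩
    exact hbound s(v, w) (G.mem_edgeSet.mpr hw)
  have key : ∀ a : ℕ, ∀ u : V, ∀ b : ℕ, b ∈ ICspec G c u → sInf (ICspec G c u) = a →
      ∃ Y : Finset V, b + 1 ≤ Y.card ∧
        ∀ y ∈ Y, y = u ∨ (G.Adj u y ∧ c s(u, y) ≤ b) ∨ ∃ i ∈ ICspec G c y, i < a := by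
    intro a
    induction a using Nat.strong_induction_on with
    | _ a IHa =>
    intro u b hb ha
    have hne : (ICspec G c u).Nonempty := ⟨b, hb⟩
    have hma : a ∈ ICspec G c u := by rw [← ha]; exact Nat.sInf_mem hne
    have ha_le : ∀ i ∈ ICspec G c u, a ≤ i := fun i hi => ha ▸ Nat.sInf_le hi
    have hab : a ≤ b := ha_le b hb
    have ha1 : 1 ≤ a := (hspec_bound u a hma).1
    have hbt : b ≤ t := (hspec_bound u b hb).2
    set T : Finset V := Finset.univ.filter (fun x => G.Adj u x ∧ c s(u, x) ≤ b) with hTdef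
    have hTmem : ∀ x, x ∈ T ↔ G.Adj u x ∧ c s(u, x) ≤ b := by
      intro x; rw [hTdef]; simp
    have hTcard : T.card = b + 1 - a := by
      rw [← Nat.card_Icc a b]
      apply Finset.card_bij (fun x _ => c s(u, x))
      · intro x hx
        rcases (hTmem x).mp hx with ⟨hadj, hle⟩
        exact Finset.mem_Icc.mpr ⟨ha_le _ ⟨x, hadj, rfl⟩, hle⟩
      · intro x₁ hx₁ x₂ hx₂ hcc
        by_contra hne'
        exact hproper u x₁ x₂ ((hTmem x₁).mp hx₁).1 ((hTmem x₂).mp hx₂).1 hne' hcc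
      · intro j hj
        rcases Finset.mem_Icc.mp hj with ⟨haj, hjb⟩
        obtain ⟨w, hw, hcw⟩ := hinterval u a j b hma hb haj hjb
        exact ⟨w, (hTmem w).mpr ⟨hw, by rw [hcw]; exact hjb⟩, hcw⟩
    have huT : u ∉ T := by
      intro huT
      exact G.loopless.irrefl u ((hTmem u).mp huT).1
    by_cases hstall : ∃ x, G.Adj u x ∧ ∃ i ∈ ICspec G c x, i < a
    · -- descent case
      obtain ⟨x₀, hx₀adj, i₀, hi₀, hi₀a⟩ := hstall
      have ha2 : 2 ≤ a := by
        have := (hspec_bound x₀ i₀ hi₀).1; omega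
      obtain ⟨u', hu'S, hmin⟩ :=
        Finset.exists_min_image (Finset.univ.filter (fun x => G.Adj u x))
          (fun x => sInf (ICspec G c x)) ⟨x₀, by simp [hx₀adj]⟩
      have hu'adj : G.Adj u u' := by simpa using hu'S
      have hmin' : ∀ x, G.Adj u x → sInf (ICspec G c u') ≤ sInf (ICspec G c x) := by
        intro x hx; exact hmin x (by simp [hx])
      have ha' : sInf (ICspec G c u') < a := by
        have h1 := hmin' x₀ hx₀adj
        have h2 : sInf (ICspec G c x₀) ≤ i₀ := Nat.sInf_le hi₀
        omega
      have he₀u : c s(u, u') ∈ ICspec G c u := ⟨u', hu'adj, rfl⟩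
      have he₀u' : c s(u, u') ∈ ICspec G c u' := ⟨u, hu'adj.symm, by rw [Sym2.eq_swap]⟩
      have hae₀ : a ≤ c s(u, u') := ha_le _ he₀u
      have ha'' : sInf (ICspec G c u') ∈ ICspec G c u' := Nat.sInf_mem ⟨_, he₀u'⟩
      have hb' : a - 1 ∈ ICspec G c u' :=
        hinterval u' (sInf (ICspec G c u')) (a - 1) (c s(u, u')) ha'' he₀u'
          (by omega) (by omega)
      obtain ⟨Y', hY'card, hY'⟩ := IHa (sInf (ICspec G c u')) ha' u' (a - 1) hb' rfl
      have huY' : u ∉ Y' := by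
        intro huY'
        rcases hY' u huY' with h | ⟨h1, h2⟩ | ⟨i, hi, hia'⟩
        · exact G.loopless.irrefl u (h ▸ hu'adj)
        · rw [Sym2.eq_swap] at h2; omega
        · have := ha_le i hi; omega
      have hd2 : ∀ x ∈ T, x ≠ u' → x ∉ Y' := by
        intro x hxT hxu' hxY'
        rcases hY' x hxY' with h | ⟨h1, h2⟩ | ⟨i, hi, hia'⟩
        · exact hxu' h
        · exact hG {u, u', x} (is3Clique_triple_iff.mpr
            ⟨hu'adj, ((hTmem x).mp hxT).1, h1⟩)
        · have h3 := hmin' x ((hTmem x).mp hxT).1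
          have h4 := Nat.sInf_le hi
          omega
      refine ⟨insert u (Y' ∪ (T \ {u'})), ?_, ?_⟩
      · have hdisj : Disjoint Y' (T \ {u'}) := by
          rw [Finset.disjoint_right]
          intro x hx
          rcases Finset.mem_sdiff.mp hx with ⟨hxT, hxu'⟩
          exact hd2 x hxT (by simpa using hxu')
        have hnotmem : u ∉ Y' ∪ (T \ {u'}) := by
          rw [Finset.mem_union]
          rintro (h | h)
          · exact huY' h
          · exact huT (Finset.mem_sdiff.mp h).1
        rw [Finset.card_insert_of_notMem hnotmem, Finset.card_union_of_disjoint hdisj]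
        have h5 : T.card ≤ (T \ {u'}).card + 1 := by
          have := Finset.card_le_card_sdiff_add_card (s := T) (t := {u'})
          simpa using this
        omega
      · intro y hy
        rcases Finset.mem_insert.mp hy with rfl | hy'
        · exact Or.inl rfl
        rcases Finset.mem_union.mp hy' with hyY | hyT
        · rcases hY' y hyY with rfl | ⟨h1, h2⟩ | ⟨i, hi, hia'⟩
          · exact Or.inr (Or.inr ⟨_, ha'', by omega⟩)
          · exact Or.inr (Or.inr ⟨c s(u', y), ⟨u', h1.symm, by rw [Sym2.eq_swap]⟩, by omega⟩)
          · exact Or.inr (Or.inr ⟨i, hi, by omega⟩)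
        · exact Or.inr (Or.inl ((hTmem y).mp (Finset.mem_sdiff.mp hyT).1))
    · -- stall case
      push_neg at hstall
      by_cases hA : a = 1
      · refine ⟨insert u T, ?_, ?_⟩
        · rw [Finset.card_insert_of_notMem huT]
          omega
        · intro y hy
          rcases Finset.mem_insert.mp hy with rfl | hyT
          · exact Or.inl rfl
          · exact Or.inr (Or.inl ((hTmem y).mp hyT))
      · have ha2 : 2 ≤ a := by omega
        set Glow : SimpleGraph V :=
          { Adj := fun x y => G.Adj x y ∧ c s(x, y) ≤ a - 1
            symm := Std.Symm.mk <| by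
              intro x y hxy
              exact ⟨hxy.1.symm, by rw [Sym2.eq_swap]; exact hxy.2⟩
            loopless := Std.Irrefl.mk fun x hx => G.loopless.irrefl x hx.1 } with hGlowdef
        have hGlowAdj : ∀ x y, Glow.Adj x y ↔ G.Adj x y ∧ c s(x, y) ≤ a - 1 := by
          intro x y; rw [hGlowdef]
        have hle : Glow ≤ G := fun x y hxy => ((hGlowAdj x y).mp hxy).1
        have hGlowFree : Glow.CliqueFree 3 := CliqueFree.anti hle hG
        have hlow : IsIntervalColoring Glow (a - 1) c := by
          refine ⟨?_, ?_, ?_, ?_⟩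
          · intro e he
            revert he
            induction e using Sym2.ind with
            | _ x y =>
            intro he
            have hxy := (hGlowAdj x y).mp (Glow.mem_edgeSet.mp he)
            exact ⟨(hbound s(x, y) (G.mem_edgeSet.mpr hxy.1)).1, hxy.2⟩
          · intro i h1i hi
            obtain ⟨e, he, hce⟩ := hused i h1i (by omega)
            revert he hce
            induction e using Sym2.ind with
            | _ x y =>
            intro he hce
            exact ⟨s(x, y), Glow.mem_edgeSet.mpr ((hGlowAdj x y).mpr
              ⟨G.mem_edgeSet.mp he, by omega⟩), hce⟩
          · intro v w₁ w₂ h1 h2 hne'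
            exact hproper v w₁ w₂ ((hGlowAdj v w₁).mp h1).1 ((hGlowAdj v w₂).mp h2).1 hne'
          · rintro v i j k ⟨w₁, hw₁, hc₁⟩ ⟨wₖ, hwₖ, hcₖ⟩ hij hjk
            have hwₖ' := (hGlowAdj v wₖ).mp hwₖ
            obtain ⟨w, hw, hcw⟩ := hinterval v i j k ⟨w₁, ((hGlowAdj v w₁).mp hw₁).1, hc₁⟩
              ⟨wₖ, hwₖ'.1, hcₖ⟩ hij hjk
            have h6 : c s(v, wₖ) ≤ a - 1 := hwₖ'.2
            exact ⟨w, (hGlowAdj v w).mpr ⟨hw, by omega⟩, hcw⟩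
        obtain ⟨Ylow, hYlowcard, hYlow⟩ := IH (a - 1) (by omega) Glow hGlowFree c hlow (by omega)
        have hYlowspec : ∀ y ∈ Ylow, ∃ i ∈ ICspec G c y, i ≤ a - 1 := by
          intro y hy
          obtain ⟨z, hz⟩ := hYlow y hy
          have hz' := (hGlowAdj y z).mp hz
          exact ⟨c s(y, z), ⟨z, hz'.1, rfl⟩, hz'.2⟩
        have hdisj : Disjoint T Ylow := by
          rw [Finset.disjoint_left]
          intro x hxT hxY
          obtain ⟨i, hi, hile⟩ := hYlowspec x hxY
          have := hstall x ((hTmem x).mp hxT).1 i hi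
          omega
        have hun : u ∉ T ∪ Ylow := by
          rw [Finset.mem_union]
          rintro (h | h)
          · exact huT h
          · obtain ⟨i, hi, hile⟩ := hYlowspec u h
            have := ha_le i hi; omega
        refine ⟨insert u (T ∪ Ylow), ?_, ?_⟩
        · rw [Finset.card_insert_of_notMem hun, Finset.card_union_of_disjoint hdisj]
          omega
        · intro y hy
          rcases Finset.mem_insert.mp hy with rfl | hy'
          · exact Or.inl rfl
          rcases Finset.mem_union.mp hy' with hyT | hyY
          · exact Or.inr (Or.inl ((hTmem y).mp hyT))
          · obtain ⟨i, hi, hile⟩ := hYlowspec y hyY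
            exact Or.inr (Or.inr ⟨i, hi, by omega⟩)
  obtain ⟨e, he, hce⟩ := hused t ht le_rfl
  revert he hce
  induction e using Sym2.ind with
  | _ u w =>
  intro he hce
  have hadj : G.Adj u w := G.mem_edgeSet.mp he
  have htspec : t ∈ ICspec G c u := ⟨w, hadj, hce⟩
  obtain ⟨Y, hYcard, hY⟩ := key (sInf (ICspec G c u)) u t htspec rfl
  refine ⟨Y, hYcard, ?_⟩
  intro y hy
  rcases hY y hy with rfl | ⟨h1, _⟩ | ⟨i, ⟨z, hz, _⟩, _⟩
  · exact ⟨w, hadj⟩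
  · exact ⟨u, h1.symm⟩
  · exact ⟨z, hz⟩

/-- If a triangle-free graph `G` admits an interval `t`-coloring, then `t ≤ |V| - 1`. -/
theorem interval_coloring_triangle_free_bound {V : Type*} [Fintype V]
    (G : SimpleGraph V) (hG : G.CliqueFree 3) (t : ℕ)
    (h : HasIntervalColoring G t) : t ≤ Fintype.card V - 1 := by
  classical
  rcases Nat.eq_zero_or_pos t with rfl | ht
  · exact Nat.zero_le _
  obtain ⟨co, hco⟩ := h
  obtain ⟨Y, hYcard, _⟩ := interval_aux t G hG co hco ht
  have h2 : Y.card ≤ Fintype.card V := Finset.card_le_univ Y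
  omega
end

section
/- If G admits an interval coloring, then for every positive integer n the lexicographic product G[nK_1] (replacing each vertex of G by n independent vertices) admits an interval coloring; moreover w(G[nK_1]) ≤ w(G)·n and W(G[nK_1]) ≥ (W(G)+1)·n − 1. -/
open SimpleGraph

section IntervalHelpers

variable {α : Type*}

private lemma succ_mul' (K n : ℕ) : (K + 1) * n = K * n + n := by
  rw [Nat.add_mul, Nat.one_mul]

private lemma block_eq' {n K K' a b : ℕ} (ha : a < n) (hb : b < n)
    (h : K * n + a = K' * n + b) : K = K' := by
  rcases Nat.lt_trichotomy K K' with hlt | he | hlt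
  · have h1 : (K + 1) * n ≤ K' * n := Nat.mul_le_mul hlt le_rfl
    have h2 : (K + 1) * n = K * n + n := succ_mul' K n
    omega
  · exact he
  · have h1 : (K' + 1) * n ≤ K * n := Nat.mul_le_mul hlt le_rfl
    have h2 : (K' + 1) * n = K' * n + n := succ_mul' K' n
    omega

private lemma div_ge' {n A K r : ℕ} (hr : r < n) (h : A * n ≤ K * n + r) : A ≤ K := by
  by_contra hc
  push_neg at hc
  have h1 : (K + 1) * n ≤ A * n := Nat.mul_le_mul hc le_rfl
  have h2 : (K + 1) * n = K * n + n := succ_mul' K n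
  omega

private lemma div_le' {n B K r b : ℕ} (hb : b < n) (h : K * n + r ≤ B * n + b) : K ≤ B := by
  by_contra hc
  push_neg at hc
  have h1 : (B + 1) * n ≤ K * n := Nat.mul_le_mul hc le_rfl
  have h2 : (B + 1) * n = B * n + n := succ_mul' B n
  omega

/-- Division with remainder, packaged without `/`/`%` atoms for `omega`. -/
private lemma euclid (M : ℕ) {n : ℕ} (hn : 0 < n) : ∃ K r, K * n + r = M ∧ r < n :=
  ⟨M / n, M % n, by rw [Nat.mul_comm]; exact Nat.div_add_mod M n, Nat.mod_lt _ hn⟩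

private lemma lex_bot_adj (G : SimpleGraph α) {n : ℕ} (p q : α × Fin n) :
    (lexProd G (⊥ : SimpleGraph (Fin n))).Adj p q ↔ G.Adj p.1 q.1 := by
  constructor
  · rintro (h | ⟨_, h⟩)
    · exact h
    · exact h.elim
  · exact Or.inl

private lemma exists_edge {G : SimpleGraph α} {t : ℕ} {c : Sym2 α → ℕ}
    (hc : IsIntervalColoring G t c) {k : ℕ} (h1 : 1 ≤ k) (h2 : k ≤ t) :
    ∃ u v, G.Adj u v ∧ c s(u, v) = k := by
  obtain ⟨e, he, hce⟩ := hc.2.1 k h1 h2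
  induction e using Sym2.ind with
  | _ u v => exact ⟨u, v, he, hce⟩

private lemma intervalBdd {V : Type*} [Fintype V] (G : SimpleGraph V) :
    BddAbove {t | HasIntervalColoring G t} := by
  classical
  refine ⟨Fintype.card (Sym2 V), fun t ht => ?_⟩
  obtain ⟨c, h1, h2, _, _⟩ := ht
  have hx : ∀ i : Fin t, ∃ e : Sym2 V, e ∈ G.edgeSet ∧ c e = (i : ℕ) + 1 := fun i =>
    h2 ((i : ℕ) + 1) (by omega) (Nat.succ_le_of_lt i.isLt)
  choose f hf hcf using hx
  have hinj : Function.Injective f := by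
    intro a b hab
    have h3 := hcf a
    rw [hab, hcf b] at h3
    exact Fin.ext (by omega)
  simpa using Fintype.card_le_of_injective f hinj

/-- The `w`-construction: a `t * n` interval coloring of `G[nK₁]`. -/
private lemma hasB (G : SimpleGraph α) {t : ℕ} (h : HasIntervalColoring G t)
    {n : ℕ} (hn : 1 ≤ n) :
    HasIntervalColoring (lexProd G (⊥ : SimpleGraph (Fin n))) (t * n) := by
  obtain ⟨c, hbound, hused, hproper, hint⟩ := h
  refine ⟨Sym2.lift ⟨fun p q => (c s(p.1, q.1) - 1) * n + ((p.2.val + q.2.val) % n) + 1,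
    fun p q => by dsimp only; rw [Sym2.eq_swap, Nat.add_comm p.2.val q.2.val]⟩, ?_, ?_, ?_, ?_⟩
  · -- bounds
    intro e he
    induction e using Sym2.ind with
    | _ p q =>
      rw [SimpleGraph.mem_edgeSet, lex_bot_adj] at he
      have hk := hbound s(p.1, q.1) (G.mem_edgeSet.mpr he)
      have h1 : (c s(p.1, q.1) - 1) * n ≤ (t - 1) * n := Nat.mul_le_mul (by omega) le_rfl
      have h2 : (t - 1 + 1) * n = (t - 1) * n + n := succ_mul' _ n
      have h0 : t - 1 + 1 = t := by omega
      rw [h0] at h2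
      have h3 : (p.2.val + q.2.val) % n < n := Nat.mod_lt _ (by omega)
      show 1 ≤ (c s(p.1, q.1) - 1) * n + ((p.2.val + q.2.val) % n) + 1 ∧
        (c s(p.1, q.1) - 1) * n + ((p.2.val + q.2.val) % n) + 1 ≤ t * n
      omega
  · -- all colors used
    intro m hm1 hm2
    obtain ⟨K, r, hKr, hrlt⟩ := euclid (m - 1) (by omega : 0 < n)
    have ht : 1 ≤ t := by
      rcases Nat.eq_zero_or_pos t with h | h
      · subst h; rw [Nat.zero_mul] at hm2; omega
      · exact h
    have h2 : (t - 1 + 1) * n = (t - 1) * n + n := succ_mul' _ n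
    have h0 : t - 1 + 1 = t := by omega
    rw [h0] at h2
    have hKt : K ≤ t - 1 :=
      div_le' (n := n) (B := t - 1) (K := K) (r := r) (b := n - 1) (by omega) (by omega)
    obtain ⟨u, v, huv, hcuv⟩ := exists_edge ⟨hbound, hused, hproper, hint⟩
      (k := K + 1) (by omega) (by omega)
    refine ⟨s((u, ⟨0, by omega⟩), (v, ⟨r, hrlt⟩)), ?_, ?_⟩
    · rw [SimpleGraph.mem_edgeSet, lex_bot_adj]; exact huv
    · show (c s(u, v) - 1) * n + ((0 + r) % n) + 1 = m
      rw [hcuv, Nat.zero_add, Nat.mod_eq_of_lt hrlt, Nat.add_sub_cancel]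
      omega
  · -- proper
    intro p q q' hadj hadj' hne
    rw [lex_bot_adj] at hadj hadj'
    intro heq
    have heq' : (c s(p.1, q.1) - 1) * n + ((p.2.val + q.2.val) % n) + 1
        = (c s(p.1, q'.1) - 1) * n + ((p.2.val + q'.2.val) % n) + 1 := heq
    have hk := hbound s(p.1, q.1) (G.mem_edgeSet.mpr hadj)
    have hk' := hbound s(p.1, q'.1) (G.mem_edgeSet.mpr hadj')
    have ha : (p.2.val + q.2.val) % n < n := Nat.mod_lt _ (by omega)
    have hb : (p.2.val + q'.2.val) % n < n := Nat.mod_lt _ (by omega)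
    by_cases hv : q.1 = q'.1
    · have hkeq : c s(p.1, q.1) = c s(p.1, q'.1) := by rw [hv]
      rw [hkeq] at heq'
      have hmod : (p.2.val + q.2.val) % n = (p.2.val + q'.2.val) % n := by omega
      have h6 : q.2.val ≡ q'.2.val [MOD n] := Nat.ModEq.add_left_cancel' p.2.val hmod
      have h7 : q.2.val = q'.2.val := by
        have h8 := h6
        unfold Nat.ModEq at h8
        rw [Nat.mod_eq_of_lt q.2.isLt, Nat.mod_eq_of_lt q'.2.isLt] at h8
        exact h8
      exact hne (Prod.ext hv (Fin.ext h7))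
    · have hkne := hproper p.1 q.1 q'.1 hadj hadj' hv
      have h8 : (c s(p.1, q.1) - 1) * n + (p.2.val + q.2.val) % n
          = (c s(p.1, q'.1) - 1) * n + (p.2.val + q'.2.val) % n := by omega
      have h9 := block_eq' ha hb h8
      exact hkne (by omega)
  · -- interval property
    intro p x y z hx hz hxy hyz
    obtain ⟨w₁, hw₁, hcx⟩ := hx
    obtain ⟨w₂, hw₂, hcz⟩ := hz
    rw [lex_bot_adj] at hw₁ hw₂
    have hcx' : (c s(p.1, w₁.1) - 1) * n + ((p.2.val + w₁.2.val) % n) + 1 = x := hcx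
    have hcz' : (c s(p.1, w₂.1) - 1) * n + ((p.2.val + w₂.2.val) % n) + 1 = z := hcz
    have hk₁ := hbound s(p.1, w₁.1) (G.mem_edgeSet.mpr hw₁)
    have hk₂ := hbound s(p.1, w₂.1) (G.mem_edgeSet.mpr hw₂)
    have ha₁ : (p.2.val + w₁.2.val) % n < n := Nat.mod_lt _ (by omega)
    have ha₂ : (p.2.val + w₂.2.val) % n < n := Nat.mod_lt _ (by omega)
    obtain ⟨K, r, hKr, hrlt⟩ := euclid (y - 1) (by omega : 0 < n)
    have hge : c s(p.1, w₁.1) - 1 ≤ K :=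
      div_ge' (n := n) (A := c s(p.1, w₁.1) - 1) (K := K) (r := r) hrlt (by omega)
    have hle : K ≤ c s(p.1, w₂.1) - 1 :=
      div_le' (n := n) (B := c s(p.1, w₂.1) - 1) (K := K) (r := r)
        (b := (p.2.val + w₂.2.val) % n) ha₂ (by omega)
    obtain ⟨w, hw, hcw⟩ := hint p.1 (c s(p.1, w₁.1)) (K + 1) (c s(p.1, w₂.1))
      ⟨w₁.1, hw₁, rfl⟩ ⟨w₂.1, hw₂, rfl⟩ (by omega) (by omega)
    have hjlt : (n + r - p.2.val) % n < n := Nat.mod_lt _ (by omega)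
    refine ⟨(w, ⟨(n + r - p.2.val) % n, hjlt⟩), Or.inl hw, ?_⟩
    show (c s(p.1, w) - 1) * n + ((p.2.val + (n + r - p.2.val) % n) % n) + 1 = y
    rw [hcw, Nat.add_sub_cancel]
    have hmod : (p.2.val + (n + r - p.2.val) % n) % n = r := by
      rw [Nat.add_mod_mod]
      have hplt : p.2.val < n := p.2.isLt
      have h9 : p.2.val + (n + r - p.2.val) = n + r := by omega
      rw [h9, Nat.add_mod_left]
      exact Nat.mod_eq_of_lt hrlt
    rw [hmod]
    omega

/-- The `W`-construction: a `(t+1) * n - 1` interval coloring of `G[nK₁]`. -/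
private lemma hasA (G : SimpleGraph α) {t : ℕ} (h : HasIntervalColoring G t)
    (ht : 1 ≤ t) {n : ℕ} (hn : 1 ≤ n) :
    HasIntervalColoring (lexProd G (⊥ : SimpleGraph (Fin n))) ((t + 1) * n - 1) := by
  obtain ⟨c, hbound, hused, hproper, hint⟩ := h
  have hts : (t + 1) * n = (t - 1) * n + 2 * n := by
    have h0 : t + 1 = (t - 1) + 2 := by omega
    rw [h0, Nat.add_mul]
  have hts2 : (t - 1) * n + n = t * n := by
    have h0 : t - 1 + 1 = t := by omega
    calc (t - 1) * n + n = (t - 1 + 1) * n := (succ_mul' _ n).symm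
      _ = t * n := by rw [h0]
  refine ⟨Sym2.lift ⟨fun p q => (c s(p.1, q.1) - 1) * n + p.2.val + q.2.val + 1,
    fun p q => by dsimp only; rw [Sym2.eq_swap]; omega⟩, ?_, ?_, ?_, ?_⟩
  · -- bounds
    intro e he
    induction e using Sym2.ind with
    | _ p q =>
      rw [SimpleGraph.mem_edgeSet, lex_bot_adj] at he
      have hk := hbound s(p.1, q.1) (G.mem_edgeSet.mpr he)
      have h1 : (c s(p.1, q.1) - 1) * n ≤ (t - 1) * n := Nat.mul_le_mul (by omega) le_rfl
      have hplt : p.2.val < n := p.2.isLt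
      have hqlt : q.2.val < n := q.2.isLt
      show 1 ≤ (c s(p.1, q.1) - 1) * n + p.2.val + q.2.val + 1 ∧
        (c s(p.1, q.1) - 1) * n + p.2.val + q.2.val + 1 ≤ (t + 1) * n - 1
      omega
  · -- all colors used
    intro m hm1 hm2
    obtain ⟨K, r, hKr, hrlt⟩ := euclid (m - 1) (by omega : 0 < n)
    by_cases hK : K < t
    · obtain ⟨u, v, huv, hcuv⟩ := exists_edge ⟨hbound, hused, hproper, hint⟩
        (k := K + 1) (by omega) hK
      refine ⟨s((u, ⟨r, hrlt⟩), (v, ⟨0, by omega⟩)), ?_, ?_⟩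
      · rw [SimpleGraph.mem_edgeSet, lex_bot_adj]; exact huv
      · show (c s(u, v) - 1) * n + r + 0 + 1 = m
        rw [hcuv, Nat.add_sub_cancel]
        omega
    · push_neg at hK
      obtain ⟨u, v, huv, hcuv⟩ := exists_edge ⟨hbound, hused, hproper, hint⟩
        (k := t) ht le_rfl
      have hMt : t * n ≤ m - 1 := by
        have h1 : t * n ≤ K * n := Nat.mul_le_mul hK le_rfl
        omega
      have hjlt : m - 1 - t * n + 1 < n := by omega
      refine ⟨s((u, ⟨n - 1, by omega⟩), (v, ⟨m - 1 - t * n + 1, hjlt⟩)), ?_, ?_⟩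
      · rw [SimpleGraph.mem_edgeSet, lex_bot_adj]; exact huv
      · show (c s(u, v) - 1) * n + (n - 1) + (m - 1 - t * n + 1) + 1 = m
        rw [hcuv]
        omega
  · -- proper
    intro p q q' hadj hadj' hne
    rw [lex_bot_adj] at hadj hadj'
    intro heq
    have heq' : (c s(p.1, q.1) - 1) * n + p.2.val + q.2.val + 1
        = (c s(p.1, q'.1) - 1) * n + p.2.val + q'.2.val + 1 := heq
    have hk := hbound s(p.1, q.1) (G.mem_edgeSet.mpr hadj)
    have hk' := hbound s(p.1, q'.1) (G.mem_edgeSet.mpr hadj')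
    by_cases hv : q.1 = q'.1
    · have hkeq : c s(p.1, q.1) = c s(p.1, q'.1) := by rw [hv]
      rw [hkeq] at heq'
      have h7 : q.2.val = q'.2.val := by omega
      exact hne (Prod.ext hv (Fin.ext h7))
    · have hkne := hproper p.1 q.1 q'.1 hadj hadj' hv
      have h8 : (c s(p.1, q.1) - 1) * n + q.2.val
          = (c s(p.1, q'.1) - 1) * n + q'.2.val := by omega
      have h9 := block_eq' q.2.isLt q'.2.isLt h8
      exact hkne (by omega)
  · -- interval property
    intro p x y z hx hz hxy hyz
    obtain ⟨w₁, hw₁, hcx⟩ := hx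
    obtain ⟨w₂, hw₂, hcz⟩ := hz
    rw [lex_bot_adj] at hw₁ hw₂
    have hcx' : (c s(p.1, w₁.1) - 1) * n + p.2.val + w₁.2.val + 1 = x := hcx
    have hcz' : (c s(p.1, w₂.1) - 1) * n + p.2.val + w₂.2.val + 1 = z := hcz
    have hk₁ := hbound s(p.1, w₁.1) (G.mem_edgeSet.mpr hw₁)
    have hk₂ := hbound s(p.1, w₂.1) (G.mem_edgeSet.mpr hw₂)
    have hplt : p.2.val < n := p.2.isLt
    have hj₁ : w₁.2.val < n := w₁.2.isLt
    have hj₂ : w₂.2.val < n := w₂.2.isLt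
    obtain ⟨K, r, hKr, hrlt⟩ := euclid (y - p.2.val - 1) (by omega : 0 < n)
    have hge : c s(p.1, w₁.1) - 1 ≤ K :=
      div_ge' (n := n) (A := c s(p.1, w₁.1) - 1) (K := K) (r := r) hrlt (by omega)
    have hle : K ≤ c s(p.1, w₂.1) - 1 :=
      div_le' (n := n) (B := c s(p.1, w₂.1) - 1) (K := K) (r := r)
        (b := w₂.2.val) hj₂ (by omega)
    obtain ⟨w, hw, hcw⟩ := hint p.1 (c s(p.1, w₁.1)) (K + 1) (c s(p.1, w₂.1))
      ⟨w₁.1, hw₁, rfl⟩ ⟨w₂.1, hw₂, rfl⟩ (by omega) (by omega)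
    refine ⟨(w, ⟨r, hrlt⟩), Or.inl hw, ?_⟩
    show (c s(p.1, w) - 1) * n + p.2.val + r + 1 = y
    rw [hcw, Nat.add_sub_cancel]
    omega

end IntervalHelpers

/-- If `G ∈ 𝔑`, then `G[nK₁] ∈ 𝔑` for any `n ≥ 1`; moreover
`w(G[nK₁]) ≤ w(G)·n` and `W(G[nK₁]) ≥ (W(G)+1)·n - 1`. -/
theorem lexProd_empty_interval_colorable {α : Type*} [Fintype α]
    (G : SimpleGraph α) (hG : IntervalColorable G) (n : ℕ) (hn : 1 ≤ n) :
    IntervalColorable (lexProd G (⊥ : SimpleGraph (Fin n))) ∧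
    wNum (lexProd G (⊥ : SimpleGraph (Fin n))) ≤ wNum G * n ∧
    WNum (lexProd G (⊥ : SimpleGraph (Fin n))) ≥ (WNum G + 1) * n - 1 := by
  obtain ⟨t₀, ht₀, hH₀⟩ := hG
  have hne : {t | HasIntervalColoring G t}.Nonempty := ⟨t₀, hH₀⟩
  have hwmem : HasIntervalColoring G (wNum G) := Nat.sInf_mem hne
  have hWmem : HasIntervalColoring G (WNum G) := Nat.sSup_mem hne (intervalBdd G)
  have hW1 : 1 ≤ WNum G := le_trans ht₀ (le_csSup (intervalBdd G) hH₀)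
  refine ⟨⟨t₀ * n, by simpa using Nat.mul_le_mul ht₀ hn, hasB G hH₀ hn⟩, ?_, ?_⟩
  · exact Nat.sInf_le (hasB G hwmem hn)
  · exact le_csSup (intervalBdd _) (hasA G hWmem hW1 hn)
end

section
/- If G is a 1-factorable graph and H is a regular graph, then the tensor product G × H is 1-factorable. -/
open SimpleGraph

open Finset

lemma birkhoff {β : Type*} [Fintype β] [DecidableEq β] :
    ∀ (r : ℕ) (R : β → β → Prop) [DecidableRel R],
      (∀ v, (univ.filter (fun w => R v w)).card = r) →
      (∀ w, (univ.filter (fun v => R v w)).card = r) →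
      ∃ f : Fin r → (β ≃ β), (∀ j v, R v (f j v)) ∧
        (∀ v w, R v w → ∃! j, f j v = w) := by
  intro r
  induction r with
  | zero =>
    intro R _ hrow _
    refine ⟨fun j => j.elim0, fun j => j.elim0, fun v w hvw => ?_⟩
    exfalso
    have hm : w ∈ univ.filter (fun w => R v w) := by simp [hvw]
    rw [Finset.card_eq_zero.mp (hrow v)] at hm
    exact absurd hm (Finset.notMem_empty w)
  | succ r ih =>
    intro R _ hrow hcol
    set t : β → Finset β := fun v => univ.filter (fun w => R v w) with ht
    have hall : ∀ S : Finset β, S.card ≤ (S.biUnion t).card := by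
      intro S
      set T := S.biUnion t with hT
      have h1 : ∀ v ∈ S, (t v).card = ∑ w ∈ T, (if R v w then 1 else 0) := by
        intro v hv
        rw [← Finset.card_filter]
        have hsub : t v ⊆ T := fun w hw => mem_biUnion.mpr ⟨v, hv, hw⟩
        have heq : T.filter (fun w => R v w) = t v := by
          ext w
          simp only [ht, mem_filter, mem_univ, true_and]
          exact ⟨fun h => h.2, fun h => ⟨hsub (by simp [ht, h]), h⟩⟩
        rw [heq]
      have h2 : (r+1) * S.card = ∑ v ∈ S, (t v).card := by
        rw [Finset.sum_congr rfl (fun v _ => hrow v), Finset.sum_const, smul_eq_mul,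
          mul_comm]
      have h3 : ∑ v ∈ S, (t v).card ≤ T.card * (r+1) := by
        rw [Finset.sum_congr rfl h1, Finset.sum_comm]
        calc ∑ w ∈ T, ∑ v ∈ S, (if R v w then 1 else 0)
            ≤ ∑ w ∈ T, (r+1) := by
              apply Finset.sum_le_sum
              intro w _
              rw [← Finset.card_filter]
              rw [← hcol w]
              exact Finset.card_le_card (fun v hv => by
                simp only [mem_filter, mem_univ, true_and] at hv ⊢
                exact hv.2)
          _ = T.card * (r+1) := by rw [Finset.sum_const, smul_eq_mul]
      have h4 := h2 ▸ h3
      exact Nat.le_of_mul_le_mul_right (by linarith [h4]) (Nat.succ_pos r)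
    obtain ⟨f, hfinj, hf⟩ := (Finset.all_card_le_biUnion_card_iff_exists_injective t).mp hall
    have hfR : ∀ v, R v (f v) := fun v => by
      have := hf v; simp only [ht, mem_filter] at this; exact this.2
    have hfbij : Function.Bijective f := (Finite.injective_iff_bijective).mp hfinj
    let ef : β ≃ β := Equiv.ofBijective f hfbij
    have hef : ∀ v, ef v = f v := fun v => rfl
    set R' : β → β → Prop := fun v w => R v w ∧ w ≠ f v with hR'
    have hrow' : ∀ v, (univ.filter (fun w => R' v w)).card = r := by
      intro v
      have heq : univ.filter (fun w => R' v w) = (univ.filter (fun w => R v w)).erase (f v) := by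
        ext w
        simp only [hR', mem_filter, mem_univ, true_and, mem_erase]
        tauto
      rw [heq, Finset.card_erase_of_mem (by simp [hfR v]), hrow v]

      omega
    have hcol' : ∀ w, (univ.filter (fun v => R' v w)).card = r := by
      intro w
      have hkey : ∀ v : β, f v = w ↔ v = ef.symm w :=
        fun v => ⟨fun h => by rw [← hef] at h; rw [← h, Equiv.symm_apply_apply],
                  fun h => by rw [h, ← hef, Equiv.apply_symm_apply]⟩
      have heq : univ.filter (fun v => R' v w)
          = (univ.filter (fun v => R v w)).erase (ef.symm w) := by
        ext v
        simp only [hR', mem_filter, mem_univ, true_and, mem_erase]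
        constructor
        · rintro ⟨h1, h2⟩
          exact ⟨fun hc => h2 (((hkey v).mpr hc).symm), h1⟩
        · rintro ⟨h1, h2⟩
          exact ⟨h2, fun hc => h1 ((hkey v).mp hc.symm)⟩
      rw [heq, Finset.card_erase_of_mem, hcol w]
      · omega
      · have h5 := hfR (ef.symm w)
        rw [(hkey (ef.symm w)).mpr rfl] at h5
        simp only [mem_filter, mem_univ, true_and]
        exact h5
    obtain ⟨g, hgR, hguniq⟩ := ih R' hrow' hcol'
    refine ⟨Fin.cases ef g, ?_, ?_⟩
    · intro j v
      induction j using Fin.cases with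
      | zero => simpa [hef] using hfR v
      | succ k => simpa using (hgR k v).1
    · intro v w hvw
      by_cases hw : w = f v
      · refine ⟨0, by simp [hef, hw], ?_⟩
        intro j hj
        induction j using Fin.cases with
        | zero => rfl
        | succ k =>
          exfalso
          simp only [Fin.cases_succ] at hj
          exact (hgR k v).2 (by rw [hj, hw])
      · obtain ⟨k, hk, hku⟩ := hguniq v w ⟨hvw, hw⟩
        refine ⟨k.succ, by simpa using hk, ?_⟩
        intro j hj
        induction j using Fin.cases with
        | zero =>
          exfalso
          simp only [Fin.cases_zero, hef] at hj
          exact hw hj.symm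
        | succ k' =>
          simp only [Fin.cases_succ] at hj
          rw [hku k' hj]

/-- If `G` is 1-factorable and `H` is regular, then `G × H` is 1-factorable. -/
theorem tensorProd_oneFactorable {α β : Type*} [Fintype α] [Fintype β]
    (G : SimpleGraph α) (H : SimpleGraph β) (r : ℕ)
    (hG : IsOneFactorable G) (hH : IsRegularGraph H r) :
    IsOneFactorable (tensorProd G H) := by
  classical
  obtain ⟨n, F, hPM, hcov⟩ := hG
  have hmatch : ∀ (i : Fin n) (u : α), ∃! w, (F i).Adj u w :=
    fun i u => (hPM i).1 ((hPM i).2 u)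
  let σ : Fin n → α → α := fun i u => (hmatch i u).choose
  have hσadj : ∀ i u, (F i).Adj u (σ i u) := fun i u => (hmatch i u).choose_spec.1
  have hσuniq : ∀ i u w, (F i).Adj u w → w = σ i u :=
    fun i u w h => (hmatch i u).choose_spec.2 w h
  have hσinv : ∀ i u, σ i (σ i u) = u :=
    fun i u => (hσuniq i (σ i u) u (hσadj i u).symm).symm
  have hσne : ∀ i u, u ≠ σ i u := fun i u => ((F i).adj_sub (hσadj i u)).ne
  -- regularity of H as filter cards
  have hrow : ∀ v, (Finset.univ.filter (fun w => H.Adj v w)).card = r := by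
    intro v
    have h := hH v
    rw [Set.ncard_eq_toFinset_card'] at h
    rw [← h]; congr 1; ext w; rw [Set.mem_toFinset]; simp
  have hcol : ∀ w, (Finset.univ.filter (fun v => H.Adj v w)).card = r := by
    intro w
    rw [← hrow w]
    congr 1
    ext v
    simp [SimpleGraph.adj_comm]
  obtain ⟨f, hfadj, hfuniq⟩ := birkhoff r H.Adj hrow hcol
  -- a linear order on α via Fin
  let eα := Fintype.equivFin α
  let ord : α → α → Prop := fun u u' => eα u < eα u'
  have htri : ∀ u u', u ≠ u' → ord u u' ∨ ord u' u := by
    intro u u' h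
    have : eα u ≠ eα u' := fun hc => h (eα.injective hc)
    exact lt_or_gt_of_ne this
  have hasym : ∀ u u', ord u u' → ¬ ord u' u := fun u u' h => lt_asymm h
  -- the matching involutions on α × β
  let τ : Fin n → Fin r → α × β → α × β := fun i j p =>
    (σ i p.1, if ord p.1 (σ i p.1) then f j p.2 else (f j).symm p.2)
  have hτinv : ∀ i j p, τ i j (τ i j p) = p := by
    rintro i j ⟨u, v⟩
    by_cases h : ord u (σ i u)
    · have h' : ¬ ord (σ i u) u := hasym _ _ h
      simp [τ, h, hσinv, h']
    · have h' : ord (σ i u) u := (htri _ _ (hσne i u)).resolve_left h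
      simp [τ, h, hσinv, h']
  have hτadj : ∀ i j p, (tensorProd G H).Adj p (τ i j p) := by
    rintro i j ⟨u, v⟩
    refine ⟨(F i).adj_sub (hσadj i u), ?_⟩
    by_cases h : ord u (σ i u)
    · simpa [τ, h] using hfadj j v
    · have h2 := hfadj j ((f j).symm v)
      simp only [Equiv.apply_symm_apply] at h2
      simpa [τ, h] using h2.symm
  let M : Fin n → Fin r → Subgraph (tensorProd G H) := fun i j =>
    { verts := Set.univ
      Adj := fun p q => (tensorProd G H).Adj p q ∧ q = τ i j p
      adj_sub := fun h => h.1
      edge_vert := fun _ => Set.mem_univ _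
      symm := by
        constructor
        rintro p q ⟨hadj, rfl⟩
        exact ⟨hadj.symm, (hτinv i j p).symm⟩ }
  have hMpm : ∀ i j, (M i j).IsPerfectMatching := by
    intro i j
    constructor
    · intro p _
      exact ⟨τ i j p, ⟨hτadj i j p, rfl⟩, fun q hq => hq.2⟩
    · intro p
      exact Set.mem_univ p
  let eq : Fin n × Fin r ≃ Fin (n * r) := finProdFinEquiv
  refine ⟨n * r, fun k => M (eq.symm k).1 (eq.symm k).2, fun k => hMpm _ _, ?_⟩
  -- key uniqueness lemma
  have key : ∀ (p q : α × β), (tensorProd G H).Adj p q → ord p.1 q.1 →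
      ∃! ij : Fin n × Fin r, (M ij.1 ij.2).Adj p q := by
    rintro ⟨u, v⟩ ⟨u', v'⟩ ⟨hGuu, hHvv⟩ hord
    obtain ⟨i, hie, hiu⟩ := hcov s(u, u') hGuu
    have hFi : (F i).Adj u u' := hie
    have hu' : u' = σ i u := hσuniq i u u' hFi
    obtain ⟨j, hjv, hju⟩ := hfuniq v v' hHvv
    have hordσ : ord u (σ i u) := hu' ▸ hord
    refine ⟨⟨i, j⟩, ⟨⟨hGuu, hHvv⟩, ?_⟩, ?_⟩
    · show (u', v') = τ i j (u, v)
      simp only [τ, if_pos hordσ]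
      exact Prod.ext hu' hjv.symm
    · rintro ⟨i', j'⟩ ⟨-, heq⟩
      have h1 : u' = σ i' u := congrArg Prod.fst heq
      have hFi' : (F i').Adj u u' := h1 ▸ hσadj i' u
      have hii : i' = i := hiu i' hFi'
      have hord' : ord u (σ i' u) := h1 ▸ hord
      have h2 : v' = f j' v := by
        have := congrArg Prod.snd heq
        simpa [τ, if_pos hord'] using this
      have hjj : j' = j := hju j' h2.symm
      exact Prod.ext hii hjj
  intro e he
  induction e using Sym2.ind with
  | _ p q =>
    rw [SimpleGraph.mem_edgeSet] at he
    have hne : p.1 ≠ q.1 := he.1.ne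
    have memiff : ∀ (i : Fin n) (j : Fin r),
        s(p, q) ∈ (M i j).edgeSet ↔ (M i j).Adj p q :=
      fun i j => SimpleGraph.Subgraph.mem_edgeSet
    rcases htri p.1 q.1 hne with hord | hord
    · obtain ⟨ij, hij, huniq⟩ := key p q he hord
      refine ⟨eq ij, ?_, ?_⟩
      · show s(p, q) ∈ (M (eq.symm (eq ij)).1 (eq.symm (eq ij)).2).edgeSet
        rw [Equiv.symm_apply_apply]
        exact hij
      · intro k hk
        have hk' : (M (eq.symm k).1 (eq.symm k).2).Adj p q := hk
        have h3 := huniq (eq.symm k) hk'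
        rw [← h3, Equiv.apply_symm_apply]
    · obtain ⟨ij, hij, huniq⟩ := key q p he.symm hord
      refine ⟨eq ij, ?_, ?_⟩
      · show s(p, q) ∈ (M (eq.symm (eq ij)).1 (eq.symm (eq ij)).2).edgeSet
        rw [Equiv.symm_apply_apply, Sym2.eq_swap]
        exact hij
      · intro k hk
        rw [Sym2.eq_swap] at hk
        have hk' : (M (eq.symm k).1 (eq.symm k).2).Adj q p := hk
        have h3 := huniq (eq.symm k) hk'
        rw [← h3, Equiv.apply_symm_apply]
end

section
/- If k is even and k ≥ 4, then C_k[nK_1] admits an interval coloring with W(C_k[nK_1]) ≥ 2n + nk/2 − 1. -/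
open SimpleGraph

/-- natural-number adjacency on the cycle -/
def adjN (k x y : ℕ) : Prop :=
  y = x + 1 ∨ x = y + 1 ∨ (x = 0 ∧ y = k - 1) ∨ (y = 0 ∧ x = k - 1)

/-- the "block coefficient" of an edge -/
def coeffN (k x y : ℕ) : ℕ :=
  if (x = 0 ∧ y = k - 1) ∨ (y = 0 ∧ x = k - 1) then 1
  else min (min x y) (k - min x y)

/-- the low coefficient at a vertex layer -/
def lowcN (k x : ℕ) : ℕ :=
  if x = 0 then 0 else if x ≤ k / 2 then x - 1 else k - x

lemma coeffN_symm (k x y : ℕ) : coeffN k x y = coeffN k y x := by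
  unfold coeffN; rw [min_comm x y]; congr 1
  simp [or_comm]

lemma coeffN_mem {k x y : ℕ} (hk4 : 4 ≤ k) (m : ℕ) (hke : k = m + m)
    (hx : x < k) (hy : y < k) (h : adjN k x y) :
    coeffN k x y = lowcN k x ∨ coeffN k x y = lowcN k x + 1 := by
  unfold adjN at h; unfold coeffN lowcN
  subst hke; split_ifs <;> omega

lemma coeffN_ne {k x y z : ℕ} (hk4 : 4 ≤ k) (m : ℕ) (hke : k = m + m)
    (hx : x < k) (hy : y < k) (hz : z < k)
    (hxy : adjN k x y) (hxz : adjN k x z) (hyz : y ≠ z) :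
    coeffN k x y ≠ coeffN k x z := by
  unfold adjN at hxy hxz; unfold coeffN
  subst hke; split_ifs <;> omega

lemma coeffN_le {k x y : ℕ} (hk4 : 4 ≤ k) (m : ℕ) (hke : k = m + m)
    (hx : x < k) (hy : y < k) (h : adjN k x y) :
    coeffN k x y ≤ k / 2 := by
  unfold adjN at h; unfold coeffN
  split_ifs <;> omega

lemma exists_lo {k x : ℕ} (hk4 : 4 ≤ k) (m : ℕ) (hke : k = m + m) (hx : x < k) :
    ∃ y, y < k ∧ adjN k x y ∧ coeffN k x y = lowcN k x := by
  by_cases h0 : x = 0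
  · exact ⟨1, by omega, Or.inl (by omega), by unfold coeffN lowcN; subst hke; split_ifs <;> omega⟩
  by_cases h1 : x ≤ k / 2
  · exact ⟨x - 1, by omega, Or.inr (Or.inl (by omega)),
      by unfold coeffN lowcN; subst hke; split_ifs <;> omega⟩
  by_cases h2 : x = k - 1
  · exact ⟨0, by omega, Or.inr (Or.inr (Or.inr ⟨rfl, h2⟩)),
      by unfold coeffN lowcN; subst hke; split_ifs <;> omega⟩
  · exact ⟨x + 1, by omega, Or.inl rfl,
      by unfold coeffN lowcN; subst hke; split_ifs <;> omega⟩

lemma exists_hi {k x : ℕ} (hk4 : 4 ≤ k) (m : ℕ) (hke : k = m + m) (hx : x < k) :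
    ∃ y, y < k ∧ adjN k x y ∧ coeffN k x y = lowcN k x + 1 := by
  by_cases h0 : x = 0
  · exact ⟨k - 1, by omega, Or.inr (Or.inr (Or.inl ⟨h0, rfl⟩)),
      by unfold coeffN lowcN; subst hke; split_ifs <;> omega⟩
  by_cases h1 : x ≤ k / 2
  · exact ⟨x + 1, by omega, Or.inl rfl,
      by unfold coeffN lowcN; subst hke; split_ifs <;> omega⟩
  · exact ⟨x - 1, by omega, Or.inr (Or.inl (by omega)),
      by unfold coeffN lowcN; subst hke; split_ifs <;> omega⟩

lemma cycle_adj_iff {k : ℕ} (hk4 : 4 ≤ k) (u v : Fin k) :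
    (cycleGraph k).Adj u v ↔ adjN k u.val v.val := by
  rw [cycleGraph_adj']
  have hu := u.isLt; have hv := v.isLt
  have hsub : ∀ a b : Fin k, (a - b).val = if b.val ≤ a.val then a.val - b.val
      else a.val + k - b.val := by
    intro a b
    have : (a - b).val = (k - b.val + a.val) % k := by
      rw [Fin.sub_def]
    rw [this]
    have h2 : k - b.val + a.val < 2 * k := by omega
    rw [show (k - b.val + a.val) % k
        = if k - b.val + a.val < k then k - b.val + a.val
          else k - b.val + a.val - k from ?_]
    · split_ifs <;> omega
    · split
      · exact Nat.mod_eq_of_lt ‹_›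
      · rw [Nat.mod_eq_sub_mod (by omega), Nat.mod_eq_of_lt (by omega)]
  rw [hsub, hsub]
  unfold adjN
  split_ifs <;> omega

/-- the edge-color function on ordered pairs -/
def colF (k n : ℕ) (p q : Fin k × Fin n) : ℕ :=
  n * coeffN k p.1.val q.1.val + 1 + (p.2.val + q.2.val)

lemma colF_symm (k n : ℕ) (p q : Fin k × Fin n) : colF k n p q = colF k n q p := by
  unfold colF; rw [coeffN_symm, Nat.add_comm p.2.val]

/-- the interval coloring of `C_k[nK₁]` -/
def colC (k n : ℕ) : Sym2 (Fin k × Fin n) → ℕ :=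
  Sym2.lift ⟨colF k n, colF_symm k n⟩

lemma colC_mk (k n : ℕ) (p q : Fin k × Fin n) : colC k n s(p, q) = colF k n p q := rfl

/-- If `k` is even, `k ≥ 4`, then `C_k[nK₁] ∈ 𝔑` and `W(C_k[nK₁]) ≥ 2n + nk/2 - 1`. -/
theorem cycle_lex_empty_interval_colorable (k n : ℕ) (hk : Even k) (hk4 : 4 ≤ k)
    (hn : 1 ≤ n) :
    IntervalColorable (lexProd (SimpleGraph.cycleGraph k) (⊥ : SimpleGraph (Fin n))) ∧
    WNum (lexProd (SimpleGraph.cycleGraph k) (⊥ : SimpleGraph (Fin n))) ≥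
      2 * n + n * k / 2 - 1 := by
    classical
  obtain ⟨m, hm⟩ := hk
  have hm2 : 2 ≤ m := by omega
  set G := lexProd (SimpleGraph.cycleGraph k) (⊥ : SimpleGraph (Fin n)) with hG
  have hadj : ∀ p q : Fin k × Fin n, G.Adj p q ↔ adjN k p.1.val q.1.val := by
    intro p q
    have h1 : G.Adj p q ↔ ((cycleGraph k).Adj p.1 q.1 ∨
        (p.1 = q.1 ∧ (⊥ : SimpleGraph (Fin n)).Adj p.2 q.2)) := Iff.rfl
    rw [h1]
    simp only [SimpleGraph.bot_adj, and_false, or_false]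
    exact cycle_adj_iff hk4 p.1 q.1
  set t := n * m + 2 * n - 1 with ht
  have hnk : n * k / 2 = n * m := by
    have : n * k = n * m + n * m := by rw [hm]; ring
    omega
  have hk2 : k / 2 = m := by omega
  -- the coloring
  have key : HasIntervalColoring G t := by
    refine ⟨colC k n, ?_, ?_, ?_, ?_⟩
    · -- bounds
      intro e
      induction e using Sym2.ind with
      | _ p q =>
        intro he
        rw [SimpleGraph.mem_edgeSet] at he
        have hA : adjN k p.1.val q.1.val := (hadj p q).mp he
        have hle : coeffN k p.1.val q.1.val ≤ k / 2 :=
          coeffN_le hk4 m hm p.1.isLt q.1.isLt hA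
        rw [hk2] at hle
        have hC : n * coeffN k p.1.val q.1.val ≤ n * m := Nat.mul_le_mul_left n hle
        have h1 := p.2.isLt; have h2 := q.2.isLt
        rw [colC_mk]; unfold colF
        omega
    · -- every color is used
      intro i h1 h2
      rw [ht] at h2
      -- find β ≤ m and r ≤ 2n-2 with i = n*β + 1 + r
      obtain ⟨β, r, hβ, hr, hi⟩ : ∃ β r : ℕ, β ≤ m ∧ r ≤ 2 * n - 2 ∧
          i = n * β + 1 + r := by
        set q0 := (i - 1) / n with hq0
        set r0 := (i - 1) % n with hr0
        have hdm : n * q0 + r0 = i - 1 := Nat.div_add_mod (i - 1) n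
        have hr0n : r0 < n := Nat.mod_lt _ (by omega)
        by_cases hc : q0 ≤ m
        · exact ⟨q0, r0, hc, by omega, by omega⟩
        · refine ⟨m, i - 1 - n * m, le_refl m, ?_, ?_⟩
          · have h3 : n * (m + 1) ≤ n * q0 := Nat.mul_le_mul_left n (by omega)
            have h4 : n * (m + 1) = n * m + n := by ring
            omega
          · have h3 : n * (m + 1) ≤ n * q0 := Nat.mul_le_mul_left n (by omega)
            have h4 : n * (m + 1) = n * m + n := by ring
            omega
      have hβ1 : β + 1 < k := by omega
      set a := min r (n - 1) with ha
      set b := r - a with hb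
      have han : a < n := by omega
      have hbn : b < n := by omega
      have hab : a + b = r := by omega
      refine ⟨s(((⟨β, by omega⟩ : Fin k), (⟨a, han⟩ : Fin n)),
        ((⟨β + 1, hβ1⟩ : Fin k), (⟨b, hbn⟩ : Fin n))), ?_, ?_⟩
      · rw [SimpleGraph.mem_edgeSet]
        exact (hadj _ _).mpr (Or.inl rfl)
      · rw [colC_mk]
        show n * coeffN k β (β + 1) + 1 + (a + b) = i
        have hco : coeffN k β (β + 1) = β := by
          unfold coeffN; split_ifs <;> omega
        rw [hco]; omega
    · -- proper
      intro v w1 w2 h1 h2 hne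
      rw [colC_mk, colC_mk]
      unfold colF
      have hA1 : adjN k v.1.val w1.1.val := (hadj v w1).mp h1
      have hA2 : adjN k v.1.val w2.1.val := (hadj v w2).mp h2
      by_cases hq : w1.1 = w2.1
      · rw [hq]
        intro hcontra
        apply hne
        have hb : w1.2.val = w2.2.val := by omega
        exact Prod.ext hq (Fin.ext hb)
      · have hvne : w1.1.val ≠ w2.1.val := fun h => hq (Fin.ext h)
        have hneC : coeffN k v.1.val w1.1.val ≠ coeffN k v.1.val w2.1.val :=
          coeffN_ne hk4 m hm v.1.isLt w1.1.isLt w2.1.isLt hA1 hA2 hvne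
        have hm1 := coeffN_mem hk4 m hm v.1.isLt w1.1.isLt hA1
        have hm2 := coeffN_mem hk4 m hm v.1.isLt w2.1.isLt hA2
        have hL : n * (lowcN k v.1.val + 1) = n * lowcN k v.1.val + n := by ring
        have hb1 := w1.2.isLt; have hb2 := w2.2.isLt
        rcases hm1 with e1 | e1 <;> rcases hm2 with e2 | e2 <;>
          rw [e1, e2] <;> rw [e1, e2] at hneC <;> first
          | (exact absurd rfl hneC)
          | (rw [hL]; omega)
    · -- interval condition
      intro v i j kk hi hkk hij hjk
      obtain ⟨w1, haw1, hc1⟩ := hi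
      obtain ⟨w2, haw2, hc2⟩ := hkk
      rw [colC_mk] at hc1 hc2
      unfold colF at hc1 hc2
      have hA1 : adjN k v.1.val w1.1.val := (hadj v w1).mp haw1
      have hA2 : adjN k v.1.val w2.1.val := (hadj v w2).mp haw2
      have hm1 := coeffN_mem hk4 m hm v.1.isLt w1.1.isLt hA1
      have hm2 := coeffN_mem hk4 m hm v.1.isLt w2.1.isLt hA2
      set L := lowcN k v.1.val with hLdef
      have hL : n * (L + 1) = n * L + n := by ring
      have hb1 := w1.2.isLt; have hb2 := w2.2.isLt
      have hlow : n * L + 1 + v.2.val ≤ j := by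
        rcases hm1 with e1 | e1 <;> rw [e1] at hc1 <;> omega
      have hhigh : j ≤ n * L + v.2.val + 2 * n := by
        rcases hm2 with e2 | e2 <;> rw [e2] at hc2 <;> omega
      set s := j - (n * L + 1 + v.2.val) with hs
      by_cases hcase : s < n
      · obtain ⟨y, hy, hay, hcy⟩ := exists_lo hk4 m hm v.1.isLt
        refine ⟨((⟨y, hy⟩ : Fin k), (⟨s, hcase⟩ : Fin n)), ?_, ?_⟩
        · exact (hadj v _).mpr hay
        · rw [colC_mk]; unfold colF
          simp only []
          rw [hcy, ← hLdef]
          omega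
      · obtain ⟨y, hy, hay, hcy⟩ := exists_hi hk4 m hm v.1.isLt
        have hsn : s - n < n := by omega
        refine ⟨((⟨y, hy⟩ : Fin k), (⟨s - n, hsn⟩ : Fin n)), ?_, ?_⟩
        · exact (hadj v _).mpr hay
        · rw [colC_mk]; unfold colF
          simp only []
          rw [hcy, ← hLdef, hL]
          omega
  constructor
  · exact ⟨t, by omega, key⟩
  · -- WNum bound
    have hbdd : BddAbove {t' | HasIntervalColoring G t'} := by
      refine ⟨Fintype.card (Sym2 (Fin k × Fin n)), ?_⟩
      rintro t' ⟨c, _, hc2, _, _⟩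
      set g : ℕ → Sym2 (Fin k × Fin n) := fun i =>
        if h : ∃ e, c e = i then h.choose
        else s(((⟨0, by omega⟩ : Fin k), (⟨0, by omega⟩ : Fin n)),
          ((⟨0, by omega⟩ : Fin k), (⟨0, by omega⟩ : Fin n))) with hg
      have hgi : ∀ i ∈ Finset.Icc 1 t', c (g i) = i := by
        intro i hi
        rw [Finset.mem_Icc] at hi
        obtain ⟨e, _, he⟩ := hc2 i hi.1 hi.2
        have hex : ∃ e, c e = i := ⟨e, he⟩
        rw [hg]; simp only [hex, dif_pos]
        exact hex.choose_spec
      have hinj : Set.InjOn g (Finset.Icc 1 t') := by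
        intro i hi j hj hij
        rw [← hgi i hi, ← hgi j hj, hij]
      have hcard := Finset.card_le_card_of_injOn g
        (fun i _ => Finset.mem_univ (g i)) hinj
      rw [Nat.card_Icc] at hcard
      simpa using hcard
    have hle : t ≤ WNum G := le_csSup hbdd key
    have hts : 2 * n + n * k / 2 - 1 = t := by rw [hnk]; omega
    rw [ge_iff_le, hts]
    exact hle
end

section
/- Let k = p·2^q with p odd and q ≥ 1. Then K_k[nK_1] (equivalently, the complete multipartite graph with k parts of size n) admits an interval coloring with W(K_k[nK_1]) ≥ (2k − p − q)·n − 1. -/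
open SimpleGraph

namespace PetrosyanAux

/-- A "good" interval-coloring package on the complete graph `K_K` (vertices `0..K-1`,
colors 0-based), together with a compatible cross matrix `N`. `T = K - 1 + S` colors. -/
structure Pack (K S : ℕ) : Type where
  c : ℕ → ℕ → ℕ
  N : ℕ → ℕ → ℕ
  L : ℕ → ℕ
  hK : 2 ≤ K
  hcsym : ∀ v w, c v w = c w v
  hL0 : L 0 = 0
  hLtop : L (K - 1) = S
  hLmax : ∀ v, v < K → L v ≤ S
  hclow : ∀ v w, v < K → w < K → v ≠ w → L v ≤ c v w
  hchigh : ∀ v w, v < K → w < K → v ≠ w → c v w + 2 ≤ L w + K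
  hcinj : ∀ v w₁ w₂, v < K → w₁ < K → w₂ < K → w₁ ≠ v → w₂ ≠ v → w₁ ≠ w₂ →
    c v w₁ ≠ c v w₂
  hccov : ∀ v x, v < K → L v ≤ x → x + 2 ≤ L v + K → ∃ w, w < K ∧ w ≠ v ∧ c v w = x
  hNsym : ∀ v w, N v w = N w v
  hNlow : ∀ v w, v < K → w < K → L v ≤ N v w
  hNhigh : ∀ v w, v < K → w < K → N v w + 1 ≤ L w + K
  hNinj : ∀ v w₁ w₂, v < K → w₁ < K → w₂ < K → w₁ ≠ w₂ → N v w₁ ≠ N v w₂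
  hNcov : ∀ v x, v < K → L v ≤ x → x + 1 ≤ L v + K → ∃ w, w < K ∧ N v w = x

lemma add_mod_cancel' {p x a b : ℕ} (ha : a < p) (hb : b < p)
    (h : (x + a) % p = (x + b) % p) : a = b := by
  have h3 : a ≡ b [MOD p] := Nat.ModEq.add_left_cancel' x h
  rwa [Nat.ModEq, Nat.mod_eq_of_lt ha, Nat.mod_eq_of_lt hb] at h3

lemma mid_eq {p i a b : ℕ} (ha : a < p) (hb : b < p)
    (h : p - 1 + (i + a) % p = p - 1 + (i + b) % p) : a = b :=
  add_mod_cancel' (x := i) ha hb (by omega)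

lemma exists_mod_eq {i r p : ℕ} (hi : i < p) (hr : r < p) :
    ∃ j, j < p ∧ (i + j) % p = r := by
  refine ⟨(r + p - i) % p, Nat.mod_lt _ (by omega), ?_⟩
  rw [Nat.add_mod_mod]
  have h : i + (r + p - i) = r + p := by omega
  rw [h, Nat.add_mod_right, Nat.mod_eq_of_lt hr]

/-! ### Base construction on `K_{2p}`. Vertex `v = 2i+ε`, low `L v = i`. -/

def bL (v : ℕ) : ℕ := v / 2

def bC (p v w : ℕ) : ℕ :=
  if v % 2 = w % 2 then
    if v % 2 = 0 then p - 1 + (v / 2 + w / 2) % p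
    else p - 1 + (2 * p - 2 - (v / 2 + w / 2)) % p
  else if v / 2 + w / 2 + 2 ≤ p then v / 2 + w / 2
  else if v / 2 + w / 2 + 1 = p then
    p - 1 + (2 * (if v % 2 = 0 then v / 2 else w / 2)) % p
  else v / 2 + w / 2 + p - 1

def bN (p v w : ℕ) : ℕ := v / 2 + w / 2 + (if v % 2 = w % 2 then 0 else p)

lemma bC_same0 {p v w : ℕ} (hpar : v % 2 = w % 2) (he : v % 2 = 0) :
    bC p v w = p - 1 + (v / 2 + w / 2) % p := by
  unfold bC; rw [if_pos hpar, if_pos he]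

lemma bC_same1_raw {p v w : ℕ} (hpar : v % 2 = w % 2) (he : ¬ v % 2 = 0) :
    bC p v w = p - 1 + (2 * p - 2 - (v / 2 + w / 2)) % p := by
  unfold bC; rw [if_pos hpar, if_neg he]

lemma bC_same1 {p v w : ℕ} (hv : v < 2 * p) (hw : w < 2 * p)
    (hpar : v % 2 = w % 2) (he : ¬ v % 2 = 0) :
    bC p v w = p - 1 + ((p - 1 - v / 2) + (p - 1 - w / 2)) % p := by
  rw [bC_same1_raw hpar he]
  have h : 2 * p - 2 - (v / 2 + w / 2) = (p - 1 - v / 2) + (p - 1 - w / 2) := by omega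
  rw [h]

lemma bC_cross_low {p v w : ℕ} (hpar : ¬ v % 2 = w % 2) (h : v / 2 + w / 2 + 2 ≤ p) :
    bC p v w = v / 2 + w / 2 := by
  unfold bC; rw [if_neg hpar, if_pos h]

lemma bC_cross_mid0 {p v w : ℕ} (hpar : ¬ v % 2 = w % 2) (h : v / 2 + w / 2 + 1 = p)
    (he : v % 2 = 0) : bC p v w = p - 1 + (v / 2 + v / 2) % p := by
  unfold bC; rw [if_neg hpar, if_neg (by omega), if_pos h, if_pos he, two_mul]

lemma bC_cross_mid1 {p v w : ℕ} (hpar : ¬ v % 2 = w % 2) (h : v / 2 + w / 2 + 1 = p)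
    (he : ¬ v % 2 = 0) : bC p v w = p - 1 + (w / 2 + w / 2) % p := by
  unfold bC; rw [if_neg hpar, if_neg (by omega), if_pos h, if_neg he, two_mul]

lemma bC_cross_high {p v w : ℕ} (hpar : ¬ v % 2 = w % 2) (h : p ≤ v / 2 + w / 2) :
    bC p v w = v / 2 + w / 2 + p - 1 := by
  unfold bC; rw [if_neg hpar, if_neg (by omega), if_neg (by omega)]

lemma bC_symm (p v w : ℕ) : bC p v w = bC p w v := by
  by_cases hpar : v % 2 = w % 2
  · by_cases he : v % 2 = 0
    · rw [bC_same0 hpar he, bC_same0 hpar.symm (hpar ▸ he), Nat.add_comm (w/2)]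
    · rw [bC_same1_raw hpar he, bC_same1_raw hpar.symm (fun h => he (hpar ▸ h)),
        Nat.add_comm (w/2)]
  · have hpar' : ¬ w % 2 = v % 2 := fun h => hpar h.symm
    rcases Nat.lt_trichotomy (v / 2 + w / 2 + 1) p with h | h | h
    · rw [bC_cross_low hpar (by omega), bC_cross_low hpar' (by omega), Nat.add_comm]
    · have he2 : v % 2 = 0 ∨ w % 2 = 0 := by omega
      by_cases he : v % 2 = 0
      · rw [bC_cross_mid0 hpar h he, bC_cross_mid1 hpar' (by omega) (by omega)]
      · rw [bC_cross_mid1 hpar h he, bC_cross_mid0 hpar' (by omega) (by omega)]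
    · rw [bC_cross_high hpar (by omega), bC_cross_high hpar' (by omega),
        Nat.add_comm (w/2)]

end PetrosyanAux

namespace PetrosyanAux

lemma bC_mid_bounds {p v w : ℕ} (hp : 1 ≤ p) (hpar : ¬ v % 2 = w % 2)
    (h : v / 2 + w / 2 + 1 = p) : p - 1 ≤ bC p v w ∧ bC p v w ≤ 2 * p - 2 := by
  by_cases he : v % 2 = 0
  · rw [bC_cross_mid0 hpar h he]
    have := Nat.mod_lt (v / 2 + v / 2) (show 0 < p by omega)
    omega
  · rw [bC_cross_mid1 hpar h he]
    have := Nat.mod_lt (w / 2 + w / 2) (show 0 < p by omega)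
    omega

lemma bC_same_bounds {p v w : ℕ} (hp : 1 ≤ p) (hpar : v % 2 = w % 2) :
    p - 1 ≤ bC p v w ∧ bC p v w ≤ 2 * p - 2 := by
  by_cases he : v % 2 = 0
  · rw [bC_same0 hpar he]
    have := Nat.mod_lt (v / 2 + w / 2) (show 0 < p by omega)
    omega
  · rw [bC_same1_raw hpar he]
    have := Nat.mod_lt (2 * p - 2 - (v / 2 + w / 2)) (show 0 < p by omega)
    omega

lemma bC_inj {p : ℕ} (hp : 1 ≤ p) {v w₁ w₂ : ℕ} (hv : v < 2*p) (h1 : w₁ < 2*p)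
    (h2 : w₂ < 2*p) (h1v : w₁ ≠ v) (h2v : w₂ ≠ v) (hne : w₁ ≠ w₂) :
    bC p v w₁ ≠ bC p v w₂ := by
  intro heq
  have hiv : v/2 < p := by omega
  have hi1 : w₁/2 < p := by omega
  have hi2 : w₂/2 < p := by omega
  by_cases a1 : v % 2 = w₁ % 2 <;> by_cases a2 : v % 2 = w₂ % 2
  · -- both same side
    by_cases e : v % 2 = 0
    · rw [bC_same0 a1 e, bC_same0 a2 e] at heq
      have := mid_eq hi1 hi2 heq
      omega
    · rw [bC_same1 hv h1 a1 e, bC_same1 hv h2 a2 e] at heq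
      have := mid_eq (show p-1-w₁/2 < p by omega) (show p-1-w₂/2 < p by omega) heq
      omega
  · -- w₁ same side, w₂ cross
    have hb1 := bC_same_bounds hp a1 (p := p) (v := v) (w := w₁)
    rcases Nat.lt_trichotomy (v / 2 + w₂ / 2 + 1) p with hs | hs | hs
    · rw [bC_cross_low a2 (by omega)] at heq
      omega
    · by_cases e : v % 2 = 0
      · rw [bC_same0 a1 e, bC_cross_mid0 a2 hs e] at heq
        have := mid_eq hi1 hiv heq
        omega
      · rw [bC_same1 hv h1 a1 e, bC_cross_mid1 a2 hs e] at heq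
        have hw2 : w₂ / 2 = p - 1 - v / 2 := by omega
        rw [hw2] at heq
        have := mid_eq (show p-1-w₁/2 < p by omega) (show p-1-v/2 < p by omega) heq
        omega
    · rw [bC_cross_high a2 (by omega)] at heq
      omega
  · -- w₂ same side, w₁ cross
    have hb2 := bC_same_bounds hp a2 (p := p) (v := v) (w := w₂)
    rcases Nat.lt_trichotomy (v / 2 + w₁ / 2 + 1) p with hs | hs | hs
    · rw [bC_cross_low a1 (by omega)] at heq
      omega
    · by_cases e : v % 2 = 0
      · rw [bC_same0 a2 e, bC_cross_mid0 a1 hs e] at heq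
        have := mid_eq hi2 hiv heq.symm
        omega
      · rw [bC_same1 hv h2 a2 e, bC_cross_mid1 a1 hs e] at heq
        have hw1 : w₁ / 2 = p - 1 - v / 2 := by omega
        rw [hw1] at heq
        have := mid_eq (show p-1-w₂/2 < p by omega) (show p-1-v/2 < p by omega) heq.symm
        omega
    · rw [bC_cross_high a1 (by omega)] at heq
      omega
  · -- both cross
    rcases Nat.lt_trichotomy (v / 2 + w₁ / 2 + 1) p with hs1 | hs1 | hs1 <;>
      rcases Nat.lt_trichotomy (v / 2 + w₂ / 2 + 1) p with hs2 | hs2 | hs2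
    · rw [bC_cross_low a1 (by omega), bC_cross_low a2 (by omega)] at heq
      omega
    · have := bC_mid_bounds hp a2 hs2
      rw [bC_cross_low a1 (by omega)] at heq
      omega
    · rw [bC_cross_low a1 (by omega), bC_cross_high a2 (by omega)] at heq
      omega
    · have := bC_mid_bounds hp a1 hs1
      rw [bC_cross_low a2 (by omega)] at heq
      omega
    · omega
    · have := bC_mid_bounds hp a1 hs1
      rw [bC_cross_high a2 (by omega)] at heq
      omega
    · rw [bC_cross_high a1 (by omega), bC_cross_low a2 (by omega)] at heq
      omega
    · have := bC_mid_bounds hp a2 hs2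
      rw [bC_cross_high a1 (by omega)] at heq
      omega
    · rw [bC_cross_high a1 (by omega), bC_cross_high a2 (by omega)] at heq
      omega

lemma bC_cov {p : ℕ} (hp : 1 ≤ p) {v x : ℕ} (hv : v < 2*p) (hx1 : v/2 ≤ x)
    (hx2 : x + 2 ≤ v/2 + 2*p) : ∃ w, w < 2*p ∧ w ≠ v ∧ bC p v w = x := by
  have hiv : v/2 < p := by omega
  rcases show x + 2 ≤ p ∨ (p - 1 ≤ x ∧ x ≤ 2*p - 2) ∨ 2*p - 1 ≤ x by omega with hx | hx | hx
  · -- low band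
    refine ⟨2*(x - v/2) + (1 - v % 2), by omega, by omega, ?_⟩
    have hpar : ¬ v % 2 = (2*(x - v/2) + (1 - v % 2)) % 2 := by omega
    rw [bC_cross_low hpar (by omega)]
    omega
  · -- mid band
    set r := x - (p - 1) with hrdef
    have hr : r < p := by omega
    by_cases e : v % 2 = 0
    · by_cases hrr : r = (v/2 + v/2) % p
      · refine ⟨2*(p - 1 - v/2) + 1, by omega, by omega, ?_⟩
        have hpar : ¬ v % 2 = (2*(p - 1 - v/2) + 1) % 2 := by omega
        rw [bC_cross_mid0 hpar (by omega) e]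
        omega
      · obtain ⟨j, hj, hjr⟩ := exists_mod_eq hiv hr
        refine ⟨2*j + v % 2, by omega, ?_, ?_⟩
        · intro hw
          apply hrr
          have : j = v / 2 := by omega
          rw [← hjr, this]
        · have hpar : v % 2 = (2*j + v % 2) % 2 := by omega
          rw [bC_same0 hpar e]
          have : (2*j + v % 2) / 2 = j := by omega
          rw [this, hjr]
          omega
    · by_cases hrr : r = ((p - 1 - v/2) + (p - 1 - v/2)) % p
      · refine ⟨2*(p - 1 - v/2), by omega, by omega, ?_⟩
        have hpar : ¬ v % 2 = (2*(p - 1 - v/2)) % 2 := by omega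
        rw [bC_cross_mid1 hpar (by omega) e]
        have h2 : (2*(p - 1 - v/2)) / 2 = p - 1 - v/2 := by omega
        rw [h2, ← hrr]
        omega
      · obtain ⟨a, ha, har⟩ := exists_mod_eq (show p - 1 - v/2 < p by omega) hr
        refine ⟨2*(p - 1 - a) + v % 2, by omega, ?_, ?_⟩
        · intro hw
          apply hrr
          have : a = p - 1 - v/2 := by omega
          rw [← har, this]
        · have hpar : v % 2 = (2*(p - 1 - a) + v % 2) % 2 := by omega
          rw [bC_same1 hv (by omega) hpar e]
          have h2 : (2*(p - 1 - a) + v % 2) / 2 = p - 1 - a := by omega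
          rw [h2]
          have h3 : p - 1 - (p - 1 - a) = a := by omega
          rw [h3, har]
          omega
  · -- high band
    refine ⟨2*(x + 1 - p - v/2) + (1 - v % 2), by omega, by omega, ?_⟩
    have hpar : ¬ v % 2 = (2*(x + 1 - p - v/2) + (1 - v % 2)) % 2 := by omega
    rw [bC_cross_high hpar (by omega)]
    omega

def basePack (p : ℕ) (hp : 1 ≤ p) : Pack (2*p) (p - 1) where
  c := bC p
  N := bN p
  L := bL
  hK := by omega
  hcsym := fun v w => bC_symm p v w
  hL0 := by simp [bL]
  hLtop := by unfold bL; omega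
  hLmax := fun v hv => by unfold bL; omega
  hclow := by
    intro v w hv hw hvw
    unfold bL
    by_cases hpar : v % 2 = w % 2
    · have := bC_same_bounds hp hpar (p := p) (v := v) (w := w)
      omega
    · rcases Nat.lt_trichotomy (v / 2 + w / 2 + 1) p with hs | hs | hs
      · rw [bC_cross_low hpar (by omega)]; omega
      · have := bC_mid_bounds hp hpar hs; omega
      · rw [bC_cross_high hpar (by omega)]; omega
  hchigh := by
    intro v w hv hw hvw
    unfold bL
    by_cases hpar : v % 2 = w % 2
    · have := bC_same_bounds hp hpar (p := p) (v := v) (w := w)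
      omega
    · rcases Nat.lt_trichotomy (v / 2 + w / 2 + 1) p with hs | hs | hs
      · rw [bC_cross_low hpar (by omega)]; omega
      · have := bC_mid_bounds hp hpar hs; omega
      · rw [bC_cross_high hpar (by omega)]
        have : v / 2 < p := by omega
        omega
  hcinj := fun v w₁ w₂ hv h1 h2 h1v h2v hne => bC_inj hp hv h1 h2 h1v h2v hne
  hccov := by
    intro v x hv hx1 hx2
    unfold bL at hx1 hx2
    exact bC_cov hp hv hx1 hx2
  hNsym := by
    intro v w
    unfold bN
    by_cases hpar : v % 2 = w % 2
    · rw [if_pos hpar, if_pos hpar.symm]; omega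
    · rw [if_neg hpar, if_neg (fun h => hpar h.symm)]; omega
  hNlow := by
    intro v w hv hw
    unfold bN bL
    by_cases hpar : v % 2 = w % 2 <;> simp [hpar] <;> omega
  hNhigh := by
    intro v w hv hw
    unfold bN bL
    have : v / 2 < p := by omega
    by_cases hpar : v % 2 = w % 2 <;> simp [hpar] <;> omega
  hNinj := by
    intro v w₁ w₂ hv h1 h2 hne heq
    unfold bN at heq
    by_cases a1 : v % 2 = w₁ % 2
    · by_cases a2 : v % 2 = w₂ % 2
      · rw [if_pos a1, if_pos a2] at heq; omega
      · rw [if_pos a1, if_neg a2] at heq; omega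
    · by_cases a2 : v % 2 = w₂ % 2
      · rw [if_neg a1, if_pos a2] at heq; omega
      · rw [if_neg a1, if_neg a2] at heq; omega
  hNcov := by
    intro v x hv hx1 hx2
    unfold bL at hx1 hx2
    rcases show x + 1 ≤ v/2 + p ∨ v/2 + p ≤ x by omega with hx | hx
    · refine ⟨2*(x - v/2) + v % 2, by omega, ?_⟩
      unfold bN
      have hpar : v % 2 = (2*(x - v/2) + v % 2) % 2 := by omega
      rw [if_pos hpar]
      omega
    · refine ⟨2*(x - v/2 - p) + (1 - v % 2), by omega, ?_⟩
      unfold bN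
      have hpar : ¬ v % 2 = (2*(x - v/2 - p) + (1 - v % 2)) % 2 := by omega
      rw [if_neg hpar]
      omega

end PetrosyanAux

namespace PetrosyanAux

/-! ### Doubling: from a pack on `K_K` to a pack on `K_{2K}`. -/

variable {K S : ℕ}

def dC (P : Pack K S) (v w : ℕ) : ℕ :=
  if v < K then (if w < K then P.c v w else P.N v (w - K) + (K-1))
  else (if w < K then P.N w (v - K) + (K-1) else P.c (v-K) (w-K) + (2*K-1))

def dN (P : Pack K S) (v w : ℕ) : ℕ :=
  if v < K then (if w < K then P.N v w else P.N v (w-K) + K)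
  else (if w < K then P.N w (v-K) + K
        else if v = w then P.L (v-K) + (K-1) else P.c (v-K) (w-K) + 2*K)

def dL (P : Pack K S) (v : ℕ) : ℕ := if v < K then P.L v else P.L (v-K) + (K-1)

set_option maxHeartbeats 1000000 in
def double (P : Pack K S) : Pack (2*K) (K - 1 + S) where
  c := dC P
  N := dN P
  L := dL P
  hK := by have := P.hK; omega
  hcsym := by
    intro v w
    unfold dC
    by_cases h1 : v < K
    · by_cases h2 : w < K
      · rw [if_pos h1, if_pos h2, if_pos h2, if_pos h1, P.hcsym]
      · rw [if_pos h1, if_neg h2, if_neg h2, if_pos h1]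
    · by_cases h2 : w < K
      · rw [if_neg h1, if_pos h2, if_pos h2, if_neg h1]
      · rw [if_neg h1, if_neg h2, if_neg h2, if_neg h1, P.hcsym]
  hL0 := by
    have := P.hK
    unfold dL
    rw [if_pos (by omega), P.hL0]
  hLtop := by
    have := P.hK
    unfold dL
    rw [if_neg (by omega)]
    have h : 2*K - 1 - K = K - 1 := by omega
    rw [h, P.hLtop]
    omega
  hLmax := by
    intro v hv
    have := P.hK
    unfold dL
    by_cases h : v < K
    · rw [if_pos h]
      have := P.hLmax v h
      omega
    · rw [if_neg h]
      have := P.hLmax (v - K) (by omega)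
      omega
  hclow := by
    intro v w hv hw hvw
    have hK2 := P.hK
    unfold dC dL
    by_cases h1 : v < K
    · rw [if_pos h1, if_pos h1]
      by_cases h2 : w < K
      · rw [if_pos h2]; exact P.hclow v w h1 h2 hvw
      · rw [if_neg h2]
        have := P.hNlow v (w - K) h1 (by omega); omega
    · rw [if_neg h1, if_neg h1]
      by_cases h2 : w < K
      · rw [if_pos h2]
        have := P.hNlow (v - K) w (by omega) h2
        rw [P.hNsym] at this
        omega
      · rw [if_neg h2]
        have := P.hclow (v - K) (w - K) (by omega) (by omega) (by omega)
        omega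
  hchigh := by
    intro v w hv hw hvw
    have hK2 := P.hK
    unfold dC dL
    by_cases h1 : v < K
    · by_cases h2 : w < K
      · simp only [if_pos h1, if_pos h2]
        have := P.hchigh v w h1 h2 hvw; omega
      · simp only [if_pos h1, if_neg h2]
        have := P.hNhigh v (w - K) h1 (by omega); omega
    · by_cases h2 : w < K
      · simp only [if_neg h1, if_pos h2]
        have := P.hNhigh (v - K) w (by omega) h2
        rw [P.hNsym] at this
        omega
      · simp only [if_neg h1, if_neg h2]
        have := P.hchigh (v - K) (w - K) (by omega) (by omega) (by omega); omega
  hcinj := by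
    intro v w₁ w₂ hv h1 h2 h1v h2v hne heq
    have hK2 := P.hK
    unfold dC at heq
    by_cases hvK : v < K
    · rw [if_pos hvK, if_pos hvK] at heq
      by_cases g1 : w₁ < K <;> by_cases g2 : w₂ < K
      · rw [if_pos g1, if_pos g2] at heq
        exact P.hcinj v w₁ w₂ hvK g1 g2 h1v h2v hne heq
      · rw [if_pos g1, if_neg g2] at heq
        have hu := P.hchigh w₁ v g1 hvK (by omega)
        rw [← P.hcsym] at hu
        have hl := P.hNlow v (w₂ - K) hvK (by omega)
        omega
      · rw [if_neg g1, if_pos g2] at heq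
        have hu := P.hchigh w₂ v g2 hvK (by omega)
        rw [← P.hcsym] at hu
        have hl := P.hNlow v (w₁ - K) hvK (by omega)
        omega
      · rw [if_neg g1, if_neg g2] at heq
        exact P.hNinj v (w₁ - K) (w₂ - K) hvK (by omega) (by omega) (by omega) (by omega)
    · rw [if_neg hvK, if_neg hvK] at heq
      by_cases g1 : w₁ < K <;> by_cases g2 : w₂ < K
      · rw [if_pos g1, if_pos g2] at heq
        have e1 : P.N w₁ (v - K) = P.N (v - K) w₁ := P.hNsym _ _
        have e2 : P.N w₂ (v - K) = P.N (v - K) w₂ := P.hNsym _ _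
        rw [e1, e2] at heq
        exact P.hNinj (v - K) w₁ w₂ (by omega) g1 g2 hne (by omega)
      · rw [if_pos g1, if_neg g2] at heq
        have hu := P.hNhigh w₁ (v - K) g1 (by omega)
        have hl := P.hclow (v - K) (w₂ - K) (by omega) (by omega) (by omega)
        omega
      · rw [if_neg g1, if_pos g2] at heq
        have hu := P.hNhigh w₂ (v - K) g2 (by omega)
        have hl := P.hclow (v - K) (w₁ - K) (by omega) (by omega) (by omega)
        omega
      · rw [if_neg g1, if_neg g2] at heq
        exact P.hcinj (v - K) (w₁ - K) (w₂ - K) (by omega) (by omega) (by omega)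
          (by omega) (by omega) (by omega) (by omega)
  hccov := by
    intro v x hv hx1 hx2
    have hK2 := P.hK
    unfold dL at hx1 hx2
    unfold dC
    by_cases hvK : v < K
    · rw [if_pos hvK] at hx1 hx2
      rcases show x + 2 ≤ P.L v + K ∨ P.L v + K - 1 ≤ x by omega with hx | hx
      · obtain ⟨w, hw, hwv, hcw⟩ := P.hccov v x hvK hx1 hx
        exact ⟨w, by omega, hwv, by rw [if_pos hvK, if_pos hw]; exact hcw⟩
      · obtain ⟨w, hw, hNw⟩ := P.hNcov v (x - (K-1)) hvK (by omega) (by omega)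
        refine ⟨w + K, by omega, by omega, ?_⟩
        rw [if_pos hvK, if_neg (by omega)]
        have h : w + K - K = w := by omega
        rw [h, hNw]
        omega
    · rw [if_neg hvK] at hx1 hx2
      rcases show x + 2 ≤ P.L (v - K) + 2*K ∨ P.L (v - K) + 2*K - 1 ≤ x by omega with hx | hx
      · obtain ⟨w, hw, hNw⟩ := P.hNcov (v - K) (x - (K-1)) (by omega) (by omega) (by omega)
        refine ⟨w, by omega, by omega, ?_⟩
        rw [if_neg hvK, if_pos hw, P.hNsym, hNw]
        omega
      · obtain ⟨w, hw, hwv, hcw⟩ := P.hccov (v - K) (x - (2*K-1)) (by omega) (by omega)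
          (by omega)
        refine ⟨w + K, by omega, by omega, ?_⟩
        rw [if_neg hvK, if_neg (by omega)]
        have h : w + K - K = w := by omega
        rw [h, hcw]
        omega
  hNsym := by
    intro v w
    unfold dN
    by_cases h1 : v < K
    · by_cases h2 : w < K
      · rw [if_pos h1, if_pos h2, if_pos h2, if_pos h1, P.hNsym]
      · rw [if_pos h1, if_neg h2, if_neg h2, if_pos h1]
    · by_cases h2 : w < K
      · rw [if_neg h1, if_pos h2, if_pos h2, if_neg h1]
      · rw [if_neg h1, if_neg h2, if_neg h2, if_neg h1]
        by_cases hvw : v = w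
        · rw [if_pos hvw, if_pos hvw.symm, hvw]
        · rw [if_neg hvw, if_neg (fun h => hvw h.symm), P.hcsym]
  hNlow := by
    intro v w hv hw
    have hK2 := P.hK
    unfold dN dL
    by_cases h1 : v < K
    · rw [if_pos h1, if_pos h1]
      by_cases h2 : w < K
      · rw [if_pos h2]; exact P.hNlow v w h1 h2
      · rw [if_neg h2]
        have := P.hNlow v (w - K) h1 (by omega); omega
    · rw [if_neg h1, if_neg h1]
      by_cases h2 : w < K
      · rw [if_pos h2]
        have := P.hNlow (v - K) w (by omega) h2
        rw [P.hNsym] at this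
        omega
      · rw [if_neg h2]
        by_cases hvw : v = w
        · rw [if_pos hvw]
        · rw [if_neg hvw]
          have := P.hclow (v - K) (w - K) (by omega) (by omega) (by omega)
          omega
  hNhigh := by
    intro v w hv hw
    have hK2 := P.hK
    unfold dN dL
    by_cases h1 : v < K
    · by_cases h2 : w < K
      · simp only [if_pos h1, if_pos h2]
        have := P.hNhigh v w h1 h2; omega
      · simp only [if_pos h1, if_neg h2]
        have := P.hNhigh v (w - K) h1 (by omega); omega
    · by_cases h2 : w < K
      · simp only [if_neg h1, if_pos h2]
        have := P.hNhigh (v - K) w (by omega) h2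
        rw [P.hNsym] at this
        omega
      · simp only [if_neg h1, if_neg h2]
        by_cases hvw : v = w
        · rw [if_pos hvw]
          have h3 : P.L (v-K) = P.L (w-K) := by rw [hvw]
          omega
        · rw [if_neg hvw]
          have := P.hchigh (v - K) (w - K) (by omega) (by omega) (by omega)
          omega
  hNinj := by
    intro v w₁ w₂ hv h1 h2 hne heq
    have hK2 := P.hK
    unfold dN at heq
    by_cases hvK : v < K
    · rw [if_pos hvK, if_pos hvK] at heq
      by_cases g1 : w₁ < K <;> by_cases g2 : w₂ < K
      · rw [if_pos g1, if_pos g2] at heq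
        exact P.hNinj v w₁ w₂ hvK g1 g2 hne heq
      · rw [if_pos g1, if_neg g2] at heq
        have hu := P.hNhigh w₁ v g1 hvK
        rw [P.hNsym] at hu
        have hl := P.hNlow v (w₂ - K) hvK (by omega)
        omega
      · rw [if_neg g1, if_pos g2] at heq
        have hu := P.hNhigh w₂ v g2 hvK
        rw [P.hNsym] at hu
        have hl := P.hNlow v (w₁ - K) hvK (by omega)
        omega
      · rw [if_neg g1, if_neg g2] at heq
        exact P.hNinj v (w₁ - K) (w₂ - K) hvK (by omega) (by omega) (by omega) (by omega)
    · rw [if_neg hvK, if_neg hvK] at heq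
      by_cases g1 : w₁ < K <;> by_cases g2 : w₂ < K
      · rw [if_pos g1, if_pos g2] at heq
        have e1 : P.N w₁ (v - K) = P.N (v - K) w₁ := P.hNsym _ _
        have e2 : P.N w₂ (v - K) = P.N (v - K) w₂ := P.hNsym _ _
        rw [e1, e2] at heq
        exact P.hNinj (v - K) w₁ w₂ (by omega) g1 g2 hne (by omega)
      · rw [if_pos g1, if_neg g2] at heq
        have e1 : P.N w₁ (v - K) = P.N (v - K) w₁ := P.hNsym _ _
        rw [e1] at heq
        have hlo := P.hNlow (v - K) w₁ (by omega) g1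
        have hhi := P.hNhigh w₁ (v - K) g1 (by omega)
        rw [e1] at hhi
        by_cases hd : v = w₂
        · rw [if_pos hd] at heq
          have h3 : P.L (v-K) = P.L (w₂-K) := by rw [hd]
          omega
        · rw [if_neg hd] at heq
          have := P.hclow (v - K) (w₂ - K) (by omega) (by omega) (by omega)
          omega
      · rw [if_neg g1, if_pos g2] at heq
        have e1 : P.N w₂ (v - K) = P.N (v - K) w₂ := P.hNsym _ _
        rw [e1] at heq
        have hlo := P.hNlow (v - K) w₂ (by omega) g2
        have hhi := P.hNhigh w₂ (v - K) g2 (by omega)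
        rw [e1] at hhi
        by_cases hd : v = w₁
        · rw [if_pos hd] at heq
          have h3 : P.L (v-K) = P.L (w₁-K) := by rw [hd]
          omega
        · rw [if_neg hd] at heq
          have := P.hclow (v - K) (w₁ - K) (by omega) (by omega) (by omega)
          omega
      · rw [if_neg g1, if_neg g2] at heq
        by_cases d1 : v = w₁ <;> by_cases d2 : v = w₂
        · exact hne (d1 ▸ d2 ▸ rfl)
        · rw [if_pos d1, if_neg d2] at heq
          have := P.hclow (v - K) (w₂ - K) (by omega) (by omega) (by omega)
          have h3 : P.L (v-K) = P.L (w₁-K) := by rw [d1]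
          omega
        · rw [if_neg d1, if_pos d2] at heq
          have := P.hclow (v - K) (w₁ - K) (by omega) (by omega) (by omega)
          have h3 : P.L (v-K) = P.L (w₂-K) := by rw [d2]
          omega
        · rw [if_neg d1, if_neg d2] at heq
          exact P.hcinj (v - K) (w₁ - K) (w₂ - K) (by omega) (by omega) (by omega)
            (by omega) (by omega) (by omega) (by omega)
  hNcov := by
    intro v x hv hx1 hx2
    have hK2 := P.hK
    unfold dL at hx1 hx2
    unfold dN
    by_cases hvK : v < K
    · rw [if_pos hvK] at hx1 hx2
      rcases show x + 1 ≤ P.L v + K ∨ P.L v + K ≤ x by omega with hx | hx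
      · obtain ⟨w, hw, hNw⟩ := P.hNcov v x hvK hx1 hx
        exact ⟨w, by omega, by rw [if_pos hvK, if_pos hw]; exact hNw⟩
      · obtain ⟨w, hw, hNw⟩ := P.hNcov v (x - K) hvK (by omega) (by omega)
        refine ⟨w + K, by omega, ?_⟩
        rw [if_pos hvK, if_neg (by omega)]
        have h : w + K - K = w := by omega
        rw [h, hNw]
        omega
    · rw [if_neg hvK] at hx1 hx2
      rcases show x = P.L (v - K) + (K-1) ∨ (P.L (v-K) + K ≤ x ∧ x + 1 ≤ P.L (v-K) + 2*K)
          ∨ P.L (v-K) + 2*K ≤ x by omega with hx | hx | hx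
      · refine ⟨v, by omega, ?_⟩
        rw [if_neg hvK, if_neg hvK, if_pos rfl]
        omega
      · obtain ⟨w, hw, hNw⟩ := P.hNcov (v - K) (x - K) (by omega) (by omega) (by omega)
        refine ⟨w, by omega, ?_⟩
        rw [if_neg hvK, if_pos hw, P.hNsym, hNw]
        omega
      · obtain ⟨w, hw, hwv, hcw⟩ := P.hccov (v - K) (x - 2*K) (by omega) (by omega)
          (by omega)
        refine ⟨w + K, by omega, ?_⟩
        rw [if_neg hvK, if_neg (by omega), if_neg (by omega)]
        have h : w + K - K = w := by omega
        rw [h, hcw]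
        omega

end PetrosyanAux

namespace PetrosyanAux

def Sfun (p : ℕ) : ℕ → ℕ
  | 0 => p - 1
  | m+1 => 2*p*2^m - 1 + Sfun p m

def Pack.cast {K S K' S' : ℕ} (hK : K = K') (hS : S = S') (P : Pack K S) : Pack K' S' :=
  hK ▸ hS ▸ P

def thePack (p : ℕ) (hp : 1 ≤ p) : (m : ℕ) → Pack (2*p*2^m) (Sfun p m)
  | 0 => Pack.cast (by ring) rfl (basePack p hp)
  | m+1 => Pack.cast (by ring) rfl (double (thePack p hp m))

lemma Sfun_spec (p : ℕ) (hp : 1 ≤ p) (m : ℕ) : Sfun p m + p + (m+1) = 2*p*2^m := by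
  induction m with
  | zero => unfold Sfun; rw [pow_zero, Nat.mul_one]; omega
  | succ m ih =>
    unfold Sfun
    rw [pow_succ]
    have h2 : 2*p*(2^m*2) = (2*p*2^m) * 2 := by ring
    rw [h2]
    generalize hB : 2*p*2^m = B at ih ⊢
    omega

lemma mul_block_ne {n a b s t₁ t₂ : ℕ} (hab : a < b) (ht : t₁ < n) :
    n*a + s + t₁ + 1 ≠ n*b + s + t₂ + 1 := by
  intro h
  have h1 : n*(a+1) ≤ n*b := Nat.mul_le_mul_left n hab
  have h2 : n*(a+1) = n*a + n*1 := Nat.mul_add n a 1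
  have h3 : n*1 = n := Nat.mul_one n
  linarith

end PetrosyanAux

namespace PetrosyanAux
open SimpleGraph

lemma lex_adj {k n : ℕ} (x y : Fin k × Fin n) :
    (lexProd (⊤ : SimpleGraph (Fin k)) (⊥ : SimpleGraph (Fin n))).Adj x y ↔ x.1 ≠ y.1 := by
  show (⊤ : SimpleGraph (Fin k)).Adj x.1 y.1 ∨
    (x.1 = y.1 ∧ (⊥ : SimpleGraph (Fin n)).Adj x.2 y.2) ↔ x.1 ≠ y.1
  simp

lemma main_has (k p q' n : ℕ) (hp : 1 ≤ p) (hn : 1 ≤ n) (hk : k = 2*p*2^q') :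
    HasIntervalColoring (lexProd (⊤ : SimpleGraph (Fin k)) (⊥ : SimpleGraph (Fin n)))
      (n * (k + Sfun p q') - 1) := by
  classical
  have P : Pack k (Sfun p q') := Pack.cast hk.symm rfl (thePack p hp q')
  set S := Sfun p q' with hSdef
  have hspec : S + 2 ≤ k := by
    have h0 := Sfun_spec p hp q'
    rw [← hSdef, ← hk] at h0
    omega
  clear_value S
  clear hSdef hk
  set G := lexProd (⊤ : SimpleGraph (Fin k)) (⊥ : SimpleGraph (Fin n)) with hGdef
  have hK2 : 2 ≤ k := P.hK
  have hn0 : 0 < n := hn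
  set t := n * (k + S) - 1 with htdef
  have ht1 : 1 ≤ n * (k + S) := Nat.one_le_iff_ne_zero.mpr (by positivity)
  have ht : t + 1 = n * (k + S) := Nat.sub_add_cancel ht1
  have hmul : n * (k + S) = n * k + n * S := Nat.mul_add n k S
  have hk1 : k - 1 + 1 = k := by omega
  have hkk : n * k = n * (k - 1) + n := by
    conv_lhs => rw [← hk1]
    rw [Nat.mul_add, Nat.mul_one]
  -- the coloring function
  set f : (Fin k × Fin n) → (Fin k × Fin n) → ℕ :=
    fun x y => n * P.c x.1 y.1 + ((x.2 : ℕ) + (y.2 : ℕ)) + 1 with hfdef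
  have hfsymm : ∀ x y, f x y = f y x := by
    intro x y
    simp only [hfdef]
    rw [P.hcsym, Nat.add_comm (x.2 : ℕ)]
  set col : Sym2 (Fin k × Fin n) → ℕ := Sym2.lift ⟨f, hfsymm⟩ with hcoldef
  have colEq : ∀ x y, col s(x, y) = f x y := fun x y => Sym2.lift_mk ..
  have hne_val : ∀ {x y : Fin k × Fin n}, x.1 ≠ y.1 → (x.1 : ℕ) ≠ (y.1 : ℕ) :=
    fun h h' => h (Fin.val_injective h')
  -- forward bounds
  have fwd : ∀ x y : Fin k × Fin n, x.1 ≠ y.1 →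
      n * P.L x.1 + x.2 + 1 ≤ f x y ∧ f x y + n ≤ n * P.L x.1 + x.2 + n * k := by
    intro x y hne
    have h1 : P.L x.1 ≤ P.c x.1 y.1 :=
      P.hclow _ _ x.1.isLt y.1.isLt (hne_val hne)
    have h2 : P.c x.1 y.1 + 2 ≤ P.L x.1 + k := by
      have h := P.hchigh (y.1 : ℕ) (x.1 : ℕ) y.1.isLt x.1.isLt (hne_val (Ne.symm hne))
      rwa [← P.hcsym] at h
    have m1 : n * P.L x.1 ≤ n * P.c x.1 y.1 := Nat.mul_le_mul_left n h1
    have m2 : n * (P.c x.1 y.1 + 2) ≤ n * (P.L x.1 + k) := Nat.mul_le_mul_left n h2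
    have e2 : n * (P.c x.1 y.1 + 2) = n * P.c x.1 y.1 + n * 2 := Nat.mul_add ..
    have e3 : n * (P.L x.1 + k) = n * P.L x.1 + n * k := Nat.mul_add ..
    have hy2 : (y.2 : ℕ) < n := y.2.isLt
    constructor
    · simp only [hfdef]; linarith
    · simp only [hfdef]; linarith
  -- presence characterization
  have pres : ∀ (x : Fin k × Fin n) (m : ℕ),
      (∃ y, x.1 ≠ y.1 ∧ f x y = m) ↔
      (n * P.L x.1 + x.2 + 1 ≤ m ∧ m + n ≤ n * P.L x.1 + x.2 + n * k) := by
    intro x m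
    constructor
    · rintro ⟨y, hne, rfl⟩
      exact fwd x y hne
    · rintro ⟨h1, h2⟩
      obtain ⟨y', hy'⟩ := Nat.exists_eq_add_of_le h1
      have hy'lt : y' < n * (k - 1) := by linarith
      obtain ⟨d, hd⟩ : ∃ d, d = y' / n := ⟨_, rfl⟩
      obtain ⟨b, hb⟩ : ∃ b, b = y' % n := ⟨_, rfl⟩
      have hbn : b < n := by rw [hb]; exact Nat.mod_lt _ hn0
      have hdm : n * d + b = y' := by rw [hd, hb]; exact Nat.div_add_mod y' n
      have hdlt : d < k - 1 := by
        rw [hd]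
        have hy2 := hy'lt
        rw [Nat.mul_comm] at hy2
        exact (Nat.div_lt_iff_lt_mul hn0).mpr hy2
      clear hd hb
      obtain ⟨w, hwk, hwv, hcw⟩ := P.hccov (x.1 : ℕ) (P.L x.1 + d) x.1.isLt
        (Nat.le_add_right _ _) (by omega)
      refine ⟨(⟨w, hwk⟩, ⟨b, hbn⟩), fun h => hwv ((congrArg Fin.val h).symm), ?_⟩
      have hcol : f x (⟨w, hwk⟩, ⟨b, hbn⟩) = n * P.c (x.1 : ℕ) w + ((x.2 : ℕ) + b) + 1 := by
        rw [hfdef]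
      rw [hcol, hcw]
      have he : n * (P.L x.1 + d) = n * P.L (x.1 : ℕ) + n * d := Nat.mul_add ..
      linarith
  refine ⟨col, ?_, ?_, ?_, ?_⟩
  · -- bounds
    intro e he
    induction e using Sym2.ind with
    | _ x y =>
      have hne : x.1 ≠ y.1 := (lex_adj x y).mp ((G.mem_edgeSet).mp he)
      rw [colEq]
      constructor
      · exact le_trans (Nat.succ_le_succ (Nat.zero_le _)) (fwd x y hne).1
      · have hb := (fwd x y hne).2
        have hL : P.L x.1 ≤ S := P.hLmax _ x.1.isLt
        have mL : n * P.L x.1 ≤ n * S := Nat.mul_le_mul_left n hL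
        have hx2 : (x.2 : ℕ) < n := x.2.isLt
        linarith
  · -- surjectivity
    intro i hi1 hit
    have hit' : i ≤ n * (k + S) - 1 := hit
    by_cases hc : i + n ≤ n * k
    · set x0 : Fin k × Fin n := (⟨0, by omega⟩, ⟨0, by omega⟩) with hx0
      have hL0' : P.L (x0.1 : ℕ) = 0 := P.hL0
      have hx02 : (x0.2 : ℕ) = 0 := rfl
      obtain ⟨y, hney, hval⟩ := (pres x0 i).mpr (by
        rw [hL0', hx02, Nat.mul_zero]
        constructor
        · linarith
        · linarith)
      refine ⟨s(x0, y), ?_, ?_⟩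
      · exact (G.mem_edgeSet).mpr ((lex_adj _ _).mpr hney)
      · rw [colEq]; exact hval
    · set xt : Fin k × Fin n := (⟨k - 1, by omega⟩, ⟨n - 1, by omega⟩) with hxt
      have hLt' : P.L (xt.1 : ℕ) = S := P.hLtop
      have hxt2 : (xt.2 : ℕ) = n - 1 := rfl
      have hS1 : S + 1 ≤ k - 1 := by omega
      have mS : n * (S + 1) ≤ n * (k - 1) := Nat.mul_le_mul_left n hS1
      have eS : n * (S + 1) = n * S + n * 1 := Nat.mul_add ..
      have e1 : n * 1 = n := Nat.mul_one n
      have hnm : n - 1 + 1 = n := by omega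
      obtain ⟨y, hney, hval⟩ := (pres xt i).mpr (by
        rw [hLt', hxt2]
        constructor
        · linarith
        · linarith)
      refine ⟨s(xt, y), ?_, ?_⟩
      · exact (G.mem_edgeSet).mpr ((lex_adj _ _).mpr hney)
      · rw [colEq]; exact hval
  · -- properness
    intro v w₁ w₂ ha1 ha2 hne
    have hne1 : v.1 ≠ w₁.1 := (lex_adj v w₁).mp ha1
    have hne2 : v.1 ≠ w₂.1 := (lex_adj v w₂).mp ha2
    rw [colEq, colEq]
    by_cases h12 : w₁.1 = w₂.1
    · have hcc : P.c (v.1 : ℕ) (w₁.1 : ℕ) = P.c (v.1 : ℕ) (w₂.1 : ℕ) := by rw [h12]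
      intro heq
      simp only [hfdef] at heq
      rw [hcc] at heq
      have h2 : (w₁.2 : ℕ) = (w₂.2 : ℕ) := by linarith
      exact hne (Prod.ext h12 (Fin.val_injective h2))
    · have hcc : P.c (v.1 : ℕ) (w₁.1 : ℕ) ≠ P.c (v.1 : ℕ) (w₂.1 : ℕ) :=
        P.hcinj _ _ _ v.1.isLt w₁.1.isLt w₂.1.isLt
          (fun h => hne1 (Fin.val_injective h).symm)
          (fun h => hne2 (Fin.val_injective h).symm)
          (fun h => h12 (Fin.val_injective h))
      simp only [hfdef]
      rcases Nat.lt_or_ge (P.c (v.1 : ℕ) (w₁.1 : ℕ)) (P.c (v.1 : ℕ) (w₂.1 : ℕ)) with h | h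
      · intro heq
        have e1 : n * P.c (v.1:ℕ) (w₁.1:ℕ) + ((v.2:ℕ) + (w₁.2:ℕ)) + 1
            = n * P.c (v.1:ℕ) (w₁.1:ℕ) + (v.2:ℕ) + (w₁.2:ℕ) + 1 := by ring
        have e2 : n * P.c (v.1:ℕ) (w₂.1:ℕ) + ((v.2:ℕ) + (w₂.2:ℕ)) + 1
            = n * P.c (v.1:ℕ) (w₂.1:ℕ) + (v.2:ℕ) + (w₂.2:ℕ) + 1 := by ring
        rw [e1, e2] at heq
        exact mul_block_ne h w₁.2.isLt heq
      · have hlt : P.c (v.1:ℕ) (w₂.1:ℕ) < P.c (v.1:ℕ) (w₁.1:ℕ) := by omega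
        intro heq
        have e1 : n * P.c (v.1:ℕ) (w₁.1:ℕ) + ((v.2:ℕ) + (w₁.2:ℕ)) + 1
            = n * P.c (v.1:ℕ) (w₁.1:ℕ) + (v.2:ℕ) + (w₁.2:ℕ) + 1 := by ring
        have e2 : n * P.c (v.1:ℕ) (w₂.1:ℕ) + ((v.2:ℕ) + (w₂.2:ℕ)) + 1
            = n * P.c (v.1:ℕ) (w₂.1:ℕ) + (v.2:ℕ) + (w₂.2:ℕ) + 1 := by ring
        rw [e1, e2] at heq
        exact mul_block_ne hlt w₂.2.isLt heq.symm
  · -- interval property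
    intro v i j kk hi hk' hij hjk
    obtain ⟨wi, hai, hvi⟩ := hi
    obtain ⟨wk, hak, hvk⟩ := hk'
    have hnei : v.1 ≠ wi.1 := (lex_adj v wi).mp hai
    have hnek : v.1 ≠ wk.1 := (lex_adj v wk).mp hak
    rw [colEq] at hvi hvk
    have bi := (fwd v wi hnei).1
    have bk := (fwd v wk hnek).2
    obtain ⟨y, hney, hval⟩ := (pres v j).mpr ⟨by linarith, by linarith⟩
    exact ⟨y, (lex_adj v y).mpr hney, by rw [colEq]; exact hval⟩

end PetrosyanAux

namespace PetrosyanAux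
open SimpleGraph

lemma bdd_above_hasIC {V : Type*} [Fintype V] [DecidableEq V] (G : SimpleGraph V) :
    BddAbove {t | HasIntervalColoring G t} := by
  classical
  refine ⟨Fintype.card (Sym2 V), fun t ht => ?_⟩
  obtain ⟨c, _, hsurj, _, _⟩ := ht
  have hex : ∀ i : Fin t, ∃ e, e ∈ G.edgeSet ∧ c e = (i : ℕ) + 1 := fun i =>
    hsurj ((i : ℕ) + 1) (by omega) (by omega)
  choose f hf1 hf2 using hex
  have hinj : Function.Injective f := by
    intro a b h
    have ha := hf2 a
    rw [h, hf2 b] at ha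
    exact Fin.ext (by omega)
  simpa using Fintype.card_le_of_injective f hinj

end PetrosyanAux

/-- Let `k = p·2^q` with `p` odd and `q ≥ 1`. Then `K_k[nK₁] ∈ 𝔑` and
`W(K_k[nK₁]) ≥ (2k - p - q)·n - 1`. -/
theorem complete_lex_empty_interval_colorable (k p q n : ℕ) (hp : Odd p) (hq : 1 ≤ q)
    (hk : k = p * 2 ^ q) (hn : 1 ≤ n) :
    IntervalColorable (lexProd (⊤ : SimpleGraph (Fin k)) (⊥ : SimpleGraph (Fin n))) ∧
    WNum (lexProd (⊤ : SimpleGraph (Fin k)) (⊥ : SimpleGraph (Fin n))) ≥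
      (2 * k - p - q) * n - 1 := by
  classical
  obtain ⟨q', rfl⟩ : ∃ q', q = q' + 1 := ⟨q - 1, by omega⟩
  have hp1 : 1 ≤ p := hp.pos
  have hk' : k = 2 * p * 2 ^ q' := by rw [hk, pow_succ]; ring
  have hspec := PetrosyanAux.Sfun_spec p hp1 q'
  rw [← hk'] at hspec
  set S := PetrosyanAux.Sfun p q' with hS
  have hmain := PetrosyanAux.main_has k p q' n hp1 hn hk'
  rw [← hS] at hmain
  have hteq : (2 * k - p - (q' + 1)) * n - 1 = n * (k + S) - 1 := by
    have h1 : 2 * k - p - (q' + 1) = k + S := by omega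
    rw [h1, Nat.mul_comm]
  have hkS2 : 2 ≤ k + S := by omega
  have hle : k + S ≤ n * (k + S) := Nat.le_mul_of_pos_left (k + S) hn
  constructor
  · exact ⟨n * (k + S) - 1, by omega, hmain⟩
  · rw [ge_iff_le, hteq, WNum]
    exact le_csSup (PetrosyanAux.bdd_above_hasIC _) hmain
end
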